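/- Let (M, φ, ξ, η, g) be a (2n+1)-dimensional contact pseudo-metric manifold admitting an η-Ricci soliton (g, V, λ, μ) whose Ricci tensor satisfies Ric = a g + b η⊗η with a, b real constants. Then Ric^{ij}Ric_{ij} + λ r + μ(εa + b) = 0, where r is the scalar curvature and ε = g(ξ,ξ). -/

import Mathlib

open scoped BigOperators

/-- Abstract model of a `(2n+1)`-dimensional contact pseudo-metric manifold
`(M, φ, ξ, η, g)`.  Here `C` plays the role of the commutative ring of smooth
functions on `M` and `V` that of the `C`-module of smooth vector fields;
`d X f` is the derivative of the function `f` along the vector field `X`,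
`bracket` is the Lie bracket, `nabla` is the Levi-Civita connection of the
pseudo-Riemannian metric `g` (characterized by metric compatibility and
torsion-freeness), and `e` is a global pseudo-orthonormal frame with signs
`sgn` which is used to compute traces.  `ε = g(ξ,ξ) = ±1`, `η(ξ) = 1`,
`φ² = -Id + η ⊗ ξ`, `g(φX,φY) = g(X,Y) - ε η(X) η(Y)`, `η(X) = ε g(ξ,X)`,
and the contact condition `g(X, φY) = dη(X,Y)` holds; moreover
`∇_X ξ = -ε φX - φ h X` with `h = ½ £_ξ φ`. -/
structure ContactSetup (C : Type) [CommRing C] [Algebra ℝ C]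
    (V : Type) [AddCommGroup V] [Module ℝ V] [Module C V] [IsScalarTower ℝ C V]
    (n : ℕ) : Type where
  g : V →ₗ[C] V →ₗ[C] C
  g_symm : ∀ X Y, g X Y = g Y X
  g_nondeg : ∀ X, (∀ Y, g X Y = 0) → X = 0
  bracket : V → V → V
  d : V → C → C
  d_addX : ∀ (f : C) (X Y : V), d (X + Y) f = d X f + d Y f
  d_smulX : ∀ (c f : C) (X : V), d (c • X) f = c * d X f
  d_add : ∀ (X : V) (f₁ f₂ : C), d X (f₁ + f₂) = d X f₁ + d X f₂
  d_mul : ∀ (X : V) (f₁ f₂ : C), d X (f₁ * f₂) = d X f₁ * f₂ + f₁ * d X f₂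
  d_const : ∀ (X : V) (c : ℝ), d X (algebraMap ℝ C c) = 0
  bracket_apply : ∀ (X Y : V) (f : C), d (bracket X Y) f = d X (d Y f) - d Y (d X f)
  nabla : V → V → V
  nabla_addX : ∀ X Y Z, nabla (X + Y) Z = nabla X Z + nabla Y Z
  nabla_smulX : ∀ (f : C) (X Y : V), nabla (f • X) Y = f • nabla X Y
  nabla_addY : ∀ X Y Z, nabla X (Y + Z) = nabla X Y + nabla X Z
  nabla_leibniz : ∀ (f : C) (X Y : V), nabla X (f • Y) = d X f • Y + f • nabla X Y
  nabla_metric : ∀ X Y Z, d X (g Y Z) = g (nabla X Y) Z + g Y (nabla X Z)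
  nabla_torsion_free : ∀ X Y, nabla X Y - nabla Y X = bracket X Y
  e : Fin (2 * n + 1) → V
  sgn : Fin (2 * n + 1) → ℝ
  sgn_sq : ∀ i, sgn i * sgn i = 1
  e_orthonormal : ∀ i j, g (e i) (e j) = if i = j then algebraMap ℝ C (sgn i) else 0
  e_complete : ∀ X : V, X = ∑ i, (sgn i • g X (e i)) • e i
  φ : V →ₗ[C] V
  ξ : V
  η : V →ₗ[C] C
  ε : ℝ
  ε_pm : ε = 1 ∨ ε = -1
  η_ξ : η ξ = 1
  φ_sq : ∀ X, φ (φ X) = -X + η X • ξ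
  g_compat : ∀ X Y, g (φ X) (φ Y) = g X Y - ε • (η X * η Y)
  η_g : ∀ X, η X = ε • g ξ X
  contact : ∀ X Y, g X (φ Y)
      = (1/2 : ℝ) • (d X (η Y) - d Y (η X) - η (bracket X Y))
  nabla_xi : ∀ X, nabla X ξ
      = -(ε • φ X) - (1/2 : ℝ) • (φ (bracket ξ (φ X)) - φ (φ (bracket ξ X)))

noncomputable section

namespace ContactSetup

variable {C : Type} [CommRing C] [Algebra ℝ C]
  {V : Type} [AddCommGroup V] [Module ℝ V] [Module C V] [IsScalarTower ℝ C V]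
  {n : ℕ} (S : ContactSetup C V n)

/-- Curvature tensor `R(X,Y)Z = ∇_X ∇_Y Z - ∇_Y ∇_X Z - ∇_[X,Y] Z`. -/
def R (X Y Z : V) : V :=
  S.nabla X (S.nabla Y Z) - S.nabla Y (S.nabla X Z) - S.nabla (S.bracket X Y) Z

/-- Ricci tensor, `Ric(X,Y) = tr (Z ↦ R(Z,X)Y)`. -/
def Ric (X Y : V) : C := ∑ i, S.sgn i • S.g (S.R (S.e i) X Y) (S.e i)

/-- Ricci operator `Q`, satisfying `g(QX,Y) = Ric(X,Y)`. -/
def Q (X : V) : V := ∑ i, (S.sgn i • S.Ric X (S.e i)) • S.e i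

/-- scalar curvature `r = tr Q`. -/
def scal : C := ∑ i, S.sgn i • S.Ric (S.e i) (S.e i)

/-- Lie derivative of the metric, `(£_W g)(X,Y)`. -/
def lieG (W X Y : V) : C :=
  S.d W (S.g X Y) - S.g (S.bracket W X) Y - S.g X (S.bracket W Y)

/-- covariant derivative of the Ricci operator, `(∇_X Q) Y`. -/
def nablaQ (X Y : V) : V := S.nabla X (S.Q Y) - S.Q (S.nabla X Y)

/-- Lie derivative of the connection, `(£_W ∇)(X,Y)`. -/
def lieNabla (W X Y : V) : V :=
  S.bracket W (S.nabla X Y) - S.nabla (S.bracket W X) Y - S.nabla X (S.bracket W Y)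

/-- Lie derivative of the curvature tensor, `(£_W R)(X,Y)Z`. -/
def lieR (W X Y Z : V) : V :=
  S.bracket W (S.R X Y Z) - S.R (S.bracket W X) Y Z - S.R X (S.bracket W Y) Z
    - S.R X Y (S.bracket W Z)

/-- the tensor `h = ½ £_ξ φ`. -/
def hTen (X : V) : V := (1/2 : ℝ) • (S.bracket S.ξ (S.φ X) - S.φ (S.bracket S.ξ X))

/-- covariant derivative of `φ`, `(∇_X φ) Y`. -/
def nablaPhi (X Y : V) : V := S.nabla X (S.φ Y) - S.φ (S.nabla X Y)

/-- Lie derivative of `φ`, `(£_W φ) X`. -/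
def liePhi (W X : V) : V := S.bracket W (S.φ X) - S.φ (S.bracket W X)

/-- K-contact: `ξ` is Killing; hence `Qξ = 2nεξ` and `∇_X ξ = -ε φ X`. -/
def IsKContact : Prop :=
  (∀ X Y, S.lieG S.ξ X Y = 0) ∧ S.Q S.ξ = ((2 * n : ℝ) * S.ε) • S.ξ ∧
    ∀ X, S.nabla X S.ξ = -(S.ε • S.φ X)

/-- Sasakian: K-contact with `(∇_X φ)Y = g(X,Y)ξ - ε η(Y) X` and
`R(X,Y)ξ = η(Y)X - η(X)Y`. -/
def IsSasakian : Prop :=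
  S.IsKContact ∧ (∀ X Y, S.nablaPhi X Y = S.g X Y • S.ξ - (S.ε • S.η Y) • X) ∧
    ∀ X Y, S.R X Y S.ξ = S.η Y • X - S.η X • Y

/-- η-Ricci soliton: `£_W g + 2 Ric + 2 λ g + 2 μ η ⊗ η = 0`. -/
def IsEtaRicciSoliton (W : V) (lam mu : ℝ) : Prop :=
  ∀ X Y, S.lieG W X Y + 2 * S.Ric X Y + (2 * lam) • S.g X Y
      + (2 * mu) • (S.η X * S.η Y) = 0

end ContactSetup

end

noncomputable section

section Aux

variable {C : Type} [CommRing C] [Algebra ℝ C]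
  {V : Type} [AddCommGroup V] [Module ℝ V] [Module C V] [IsScalarTower ℝ C V]
  {n : ℕ} (S : ContactSetup C V n)

namespace ContactSetup

/-- halving trick -/
lemma half_cancel {M : Type} [AddCommGroup M] [Module ℝ M] (x : M) (h : x + x = 0) : x = 0 := by
  have h2 : (2:ℝ) • x = 0 := by rw [two_smul]; exact h
  have := congrArg (fun y => ((1:ℝ)/2) • y) h2
  simpa [smul_smul] using this

lemma d_zero (X : V) : S.d X 0 = 0 := by
  have h := S.d_add X 0 0
  simpa using h.symm

lemma d_rsmul (X : V) (r : ℝ) (f : C) : S.d X (r • f) = r • S.d X f := by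
  rw [Algebra.smul_def, Algebra.smul_def, S.d_mul, S.d_const, zero_mul, zero_add]

lemma d_one (X : V) : S.d X (1:C) = 0 := by
  have h1 : (1:C) = algebraMap ℝ C 1 := by simp
  rw [h1, S.d_const]

lemma d_sub (X : V) (f g : C) : S.d X (f - g) = S.d X f - S.d X g := by
  have h := S.d_add X (f - g) g
  simp only [sub_add_cancel] at h
  rw [h]; ring

/-- real scalars commute with C-scalars -/
lemma rsmul_comm (r : ℝ) (c : C) (v : V) : r • (c • v) = c • (r • v) := by
  rw [← algebraMap_smul C r (c • v), ← smul_assoc, ← algebraMap_smul C r v, ← smul_assoc]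
  congr 1
  simp [smul_eq_mul, mul_comm]

lemma nabla_zero₂ (X : V) : S.nabla X 0 = 0 := by
  have h := S.nabla_addY X 0 0
  simpa using h.symm

lemma nabla_zero₁ (Y : V) : S.nabla 0 Y = 0 := by
  have h := S.nabla_smulX (0:C) 0 Y
  simpa using h

lemma nabla_sub₁ (X X' Y : V) : S.nabla (X - X') Y = S.nabla X Y - S.nabla X' Y := by
  have h1 : X - X' = X + (-1 : C) • X' := by
    rw [neg_one_smul]; abel
  rw [h1, S.nabla_addX, S.nabla_smulX, neg_one_smul]
  abel

lemma nabla_sub₂ (X Y Y' : V) : S.nabla X (Y - Y') = S.nabla X Y - S.nabla X Y' := by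
  have h1 : Y - Y' = Y + (-1 : C) • Y' := by rw [neg_one_smul]; abel
  rw [h1, S.nabla_addY, S.nabla_leibniz]
  have : S.d X (-1 : C) = 0 := by
    have h2 : (-1:C) = algebraMap ℝ C (-1) := by simp
    rw [h2, S.d_const]
  rw [this, zero_smul, zero_add, neg_one_smul]
  abel

lemma nabla_rsmul₂ (X : V) (r : ℝ) (Y : V) : S.nabla X (r • Y) = r • S.nabla X Y := by
  rw [← algebraMap_smul C r Y, S.nabla_leibniz, S.d_const, zero_smul, zero_add,
    algebraMap_smul]

lemma bracket_eq (X Y : V) : S.bracket X Y = S.nabla X Y - S.nabla Y X :=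
  (S.nabla_torsion_free X Y).symm

lemma bracket_self (X : V) : S.bracket X X = 0 := by
  rw [S.bracket_eq, sub_self]

lemma bracket_zero₂ (X : V) : S.bracket X 0 = 0 := by
  rw [S.bracket_eq, S.nabla_zero₂, S.nabla_zero₁, sub_self]

lemma bracket_add₂ (X Y Y' : V) : S.bracket X (Y + Y') = S.bracket X Y + S.bracket X Y' := by
  rw [S.bracket_eq, S.bracket_eq, S.bracket_eq, S.nabla_addY, S.nabla_addX]
  abel

lemma bracket_smul₂ (X : V) (f : C) (Y : V) :
    S.bracket X (f • Y) = S.d X f • Y + f • S.bracket X Y := by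
  rw [S.bracket_eq, S.bracket_eq, S.nabla_leibniz, S.nabla_smulX, smul_sub]
  abel

lemma nabla_neg₂ (X Y : V) : S.nabla X (-Y) = - S.nabla X Y := by
  have h := S.nabla_sub₂ X 0 Y
  simpa [S.nabla_zero₂] using h

lemma nabla_neg₁ (X Y : V) : S.nabla (-X) Y = - S.nabla X Y := by
  have h := S.nabla_sub₁ 0 X Y
  simpa [S.nabla_zero₁] using h

lemma bracket_neg₂ (X Y : V) : S.bracket X (-Y) = - S.bracket X Y := by
  rw [S.bracket_eq, S.bracket_eq, S.nabla_neg₂, S.nabla_neg₁]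
  abel

end ContactSetup
end Aux

section Aux2

/-- finite additivity for plain functions into a group -/
lemma apply_sum {M N : Type} [AddCommMonoid M] [AddCommGroup N] (θ : M → N)
    (hadd : ∀ x y, θ (x + y) = θ x + θ y) {ι : Type} (s : Finset ι) (f : ι → M) :
    θ (∑ i ∈ s, f i) = ∑ i ∈ s, θ (f i) := by
  classical
  have h0 : θ 0 = 0 := by
    have h := hadd 0 0
    simp only [add_zero] at h
    exact (left_eq_add.mp h)
  induction s using Finset.induction_on with
  | empty => simpa using h0
  | insert _ _ hnot ih =>
      rw [Finset.sum_insert hnot, Finset.sum_insert hnot, hadd, ih]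

variable {C : Type} [CommRing C] [Algebra ℝ C]
  {V : Type} [AddCommGroup V] [Module ℝ V] [Module C V] [IsScalarTower ℝ C V]
  {n : ℕ} (S : ContactSetup C V n)

namespace ContactSetup

lemma eps_sq : S.ε * S.ε = 1 := by
  rcases S.ε_pm with h | h <;> rw [h] <;> norm_num

lemma eps_eps {M : Type} [AddCommMonoid M] [Module ℝ M] (x : M) :
    S.ε • S.ε • x = x := by
  rw [smul_smul, S.eps_sq, one_smul]

lemma g_smul₁ (c : C) (x y : V) : S.g (c • x) y = c * S.g x y := by
  rw [map_smul, LinearMap.smul_apply, smul_eq_mul]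

lemma g_smul₂ (c : C) (x y : V) : S.g x (c • y) = c * S.g x y := by
  rw [map_smul, smul_eq_mul]

lemma g_add₁ (x x' y : V) : S.g (x + x') y = S.g x y + S.g x' y := by
  rw [map_add, LinearMap.add_apply]

lemma g_add₂ (x y y' : V) : S.g x (y + y') = S.g x y + S.g x y' := by
  rw [map_add]

lemma g_sub₁ (x x' y : V) : S.g (x - x') y = S.g x y - S.g x' y := by
  rw [map_sub, LinearMap.sub_apply]

lemma g_sub₂ (x y y' : V) : S.g x (y - y') = S.g x y - S.g x y' := by
  rw [map_sub]

lemma g_neg₁ (x y : V) : S.g (-x) y = - S.g x y := by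
  rw [map_neg, LinearMap.neg_apply]

lemma g_neg₂ (x y : V) : S.g x (-y) = - S.g x y := by
  rw [map_neg]

lemma g_rsmul₁ (r : ℝ) (x y : V) : S.g (r • x) y = r • S.g x y := by
  rw [← algebraMap_smul C r x, S.g_smul₁, ← Algebra.smul_def]

lemma g_rsmul₂ (r : ℝ) (x y : V) : S.g x (r • y) = r • S.g x y := by
  rw [← algebraMap_smul C r y, S.g_smul₂, ← Algebra.smul_def]

lemma g_xi (X : V) : S.g S.ξ X = S.ε • S.η X := by
  rw [S.η_g, S.eps_eps]

lemma g_xi_xi : S.g S.ξ S.ξ = algebraMap ℝ C S.ε := by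
  rw [S.g_xi, S.η_ξ, Algebra.smul_def, mul_one]

/-- contraction of a C-linear functional against the frame -/
lemma contract (θ : V → C) (hadd : ∀ x y, θ (x + y) = θ x + θ y)
    (hsmul : ∀ (f : C) (x : V), θ (f • x) = f * θ x) (X : V) :
    ∑ i, S.sgn i • (S.g X (S.e i) * θ (S.e i)) = θ X := by
  conv_rhs => rw [S.e_complete X]
  rw [apply_sum θ hadd]
  refine Finset.sum_congr rfl (fun i _ => ?_)
  rw [hsmul, smul_mul_assoc]

/-- contraction with η inserted -/
lemma contract_eta (θ : V → C) (hadd : ∀ x y, θ (x + y) = θ x + θ y)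
    (hsmul : ∀ (f : C) (x : V), θ (f • x) = f * θ x) :
    ∑ i, S.sgn i • (S.η (S.e i) * θ (S.e i)) = S.ε • θ S.ξ := by
  have h1 : ∀ i, S.sgn i • (S.η (S.e i) * θ (S.e i))
      = S.ε • (S.sgn i • (S.g S.ξ (S.e i) * θ (S.e i))) := by
    intro i
    rw [S.η_g, smul_mul_assoc, smul_comm (S.sgn i) S.ε]
  rw [Finset.sum_congr rfl (fun i _ => h1 i), ← Finset.smul_sum,
    S.contract θ hadd hsmul]

/-- vector-valued contraction -/
lemma contract_vec (F : V → V) (hadd : ∀ x y, F (x + y) = F x + F y)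
    (hsmul : ∀ (f : C) (x : V), F (f • x) = f • F x) (X : V) :
    ∑ i, (S.sgn i • S.g X (S.e i)) • F (S.e i) = F X := by
  conv_rhs => rw [S.e_complete X]
  rw [apply_sum F hadd]
  exact Finset.sum_congr rfl (fun i _ => (hsmul _ _).symm)

lemma d_g_frame (U : V) (i k : Fin (2*n+1)) : S.d U (S.g (S.e i) (S.e k)) = 0 := by
  rw [S.e_orthonormal]
  by_cases h : i = k
  · subst h; rw [if_pos rfl, S.d_const]
  · rw [if_neg h, S.d_zero]

lemma omega_skew (U : V) (i k : Fin (2*n+1)) :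
    S.g (S.nabla U (S.e i)) (S.e k) + S.g (S.nabla U (S.e k)) (S.e i) = 0 := by
  have h := S.nabla_metric U (S.e i) (S.e k)
  rw [S.d_g_frame] at h
  rw [S.g_symm (S.nabla U (S.e k)) (S.e i)]
  exact h.symm

/-- the key cancellation lemma: frame corrections cancel for bilinear forms -/
lemma con1 (F : V → V → C)
    (h1 : ∀ x x' y, F (x + x') y = F x y + F x' y)
    (h2 : ∀ (f : C) x y, F (f • x) y = f * F x y)
    (h3 : ∀ x y y', F x (y + y') = F x y + F x y')
    (h4 : ∀ (f : C) x y, F x (f • y) = f * F x y)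
    (U : V) :
    ∑ i, S.sgn i • (F (S.nabla U (S.e i)) (S.e i) + F (S.e i) (S.nabla U (S.e i))) = 0 := by
  have e1 : ∀ i, F (S.nabla U (S.e i)) (S.e i)
      = ∑ k, S.sgn k • (S.g (S.nabla U (S.e i)) (S.e k) * F (S.e k) (S.e i)) := by
    intro i
    conv_lhs => rw [S.e_complete (S.nabla U (S.e i))]
    rw [apply_sum (fun x => F x (S.e i)) (fun a b => h1 a b (S.e i))]
    refine Finset.sum_congr rfl (fun k _ => ?_)
    rw [h2, smul_mul_assoc]
  have e2 : ∀ i, F (S.e i) (S.nabla U (S.e i))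
      = ∑ k, S.sgn k • (S.g (S.nabla U (S.e i)) (S.e k) * F (S.e i) (S.e k)) := by
    intro i
    conv_lhs => rw [S.e_complete (S.nabla U (S.e i))]
    rw [apply_sum (fun y => F (S.e i) y) (fun a b => h3 (S.e i) a b)]
    refine Finset.sum_congr rfl (fun k _ => ?_)
    rw [h4, smul_mul_assoc]
  have step1 : ∑ i, S.sgn i • (F (S.nabla U (S.e i)) (S.e i) + F (S.e i) (S.nabla U (S.e i)))
      = (∑ i, ∑ k, S.sgn i • (S.sgn k • (S.g (S.nabla U (S.e i)) (S.e k) * F (S.e k) (S.e i))))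
        + (∑ i, ∑ k, S.sgn i • (S.sgn k • (S.g (S.nabla U (S.e i)) (S.e k) * F (S.e i) (S.e k)))) := by
    rw [← Finset.sum_add_distrib]
    refine Finset.sum_congr rfl (fun i _ => ?_)
    rw [e1 i, e2 i, smul_add, Finset.smul_sum, Finset.smul_sum]
  have step2 : (∑ i, ∑ k, S.sgn i • (S.sgn k • (S.g (S.nabla U (S.e i)) (S.e k) * F (S.e i) (S.e k))))
      = ∑ i, ∑ k, S.sgn k • (S.sgn i • (S.g (S.nabla U (S.e k)) (S.e i) * F (S.e k) (S.e i))) := by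
    rw [Finset.sum_comm]
  rw [step1, step2, ← Finset.sum_add_distrib]
  refine Finset.sum_eq_zero (fun i _ => ?_)
  rw [← Finset.sum_add_distrib]
  refine Finset.sum_eq_zero (fun k _ => ?_)
  rw [smul_comm (S.sgn k) (S.sgn i)]
  rw [← smul_add, ← smul_add, ← add_mul]
  rw [S.omega_skew U i k, zero_mul, smul_zero, smul_zero]

end ContactSetup
end Aux2

section Aux3
variable {C : Type} [CommRing C] [Algebra ℝ C]
  {V : Type} [AddCommGroup V] [Module ℝ V] [Module C V] [IsScalarTower ℝ C V]
  {n : ℕ} (S : ContactSetup C V n)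
namespace ContactSetup

lemma eta_bracket_antisymm (X Y : V) : S.η (S.bracket Y X) = - S.η (S.bracket X Y) := by
  have h : S.bracket Y X = - S.bracket X Y := by
    rw [S.bracket_eq, S.bracket_eq]; abel
  rw [h, map_neg]

lemma phi_skew (X Y : V) : S.g (S.φ X) Y = - S.g X (S.φ Y) := by
  have h1 := S.contact X Y
  have h2 := S.contact Y X
  have h3 : S.g X (S.φ Y) + S.g Y (S.φ X) = 0 := by
    rw [h1, h2, S.eta_bracket_antisymm X Y, ← smul_add]
    have : S.d X (S.η Y) - S.d Y (S.η X) - S.η (S.bracket X Y)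
        + (S.d Y (S.η X) - S.d X (S.η Y) - - S.η (S.bracket X Y)) = 0 := by ring
    rw [this, smul_zero]
  rw [S.g_symm (S.φ X) Y]
  linear_combination h3

lemma phi_xi : S.φ S.ξ = 0 := by
  apply S.g_nondeg
  intro Y
  -- first: g(φξ, φ Z) = 0 for all Z
  have key : ∀ Z, S.g (S.φ S.ξ) (S.φ Z) = 0 := by
    intro Z
    have h := S.g_compat S.ξ Z
    rw [S.η_ξ, one_mul, S.g_xi] at h
    rw [h]
    rw [sub_self]
  -- g(φξ, ξ) = 0
  have hxx : S.g (S.φ S.ξ) S.ξ = 0 := by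
    apply half_cancel (S.g (S.φ S.ξ) S.ξ)
    have h1 : S.g (S.φ S.ξ) S.ξ = - S.g S.ξ (S.φ S.ξ) := S.phi_skew S.ξ S.ξ
    have h2 : S.g S.ξ (S.φ S.ξ) = S.g (S.φ S.ξ) S.ξ := S.g_symm _ _
    rw [h2] at h1
    linear_combination h1
  -- general
  have h := key (S.φ Y)
  rw [S.φ_sq Y] at h
  rw [map_add, map_neg] at h
  have h5 : S.g (S.φ S.ξ) (S.η Y • S.ξ) = S.η Y * S.g (S.φ S.ξ) S.ξ := by
    rw [map_smul]; rfl
  rw [h5, hxx, mul_zero, add_zero] at h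
  have := neg_eq_zero.mp (by linear_combination h)
  exact this

lemma eta_phi (X : V) : S.η (S.φ X) = 0 := by
  rw [S.η_g, S.g_symm, S.phi_skew, S.phi_xi]
  simp

lemma nabla_xi_xi : S.nabla S.ξ S.ξ = 0 := by
  rw [S.nabla_xi S.ξ, S.phi_xi, S.bracket_zero₂, S.bracket_self]
  simp

lemma g_xi_nablaxi (X : V) : S.g S.ξ (S.nabla X S.ξ) = 0 := by
  apply half_cancel
  have h := S.nabla_metric X S.ξ S.ξ
  rw [S.g_xi_xi, S.d_const] at h
  have h2 : S.g (S.nabla X S.ξ) S.ξ = S.g S.ξ (S.nabla X S.ξ) := S.g_symm _ _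
  rw [h2] at h
  exact h.symm

lemma eta_nablaxi (X : V) : S.η (S.nabla X S.ξ) = 0 := by
  rw [S.η_g, S.g_xi_nablaxi, smul_zero]

end ContactSetup

/-- the (0,2)-tensor k(X,Y) = (∇_X η)(Y) -/
def ContactSetup.kf (X Y : V) : C := S.d X (S.η Y) - S.η (S.nabla X Y)

namespace ContactSetup

lemma kf_eq (X Y : V) : S.kf X Y = S.ε • S.g (S.nabla X S.ξ) Y := by
  unfold kf
  rw [S.η_g Y, S.η_g (S.nabla X Y), S.d_rsmul]
  rw [S.nabla_metric X S.ξ Y]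
  rw [smul_add, add_sub_cancel_right]

lemma kf_xi₁ (Y : V) : S.kf S.ξ Y = 0 := by
  rw [S.kf_eq, S.nabla_xi_xi, map_zero, LinearMap.zero_apply, smul_zero]

lemma kf_xi₂ (X : V) : S.kf X S.ξ = 0 := by
  unfold kf
  rw [S.η_ξ, S.d_one, S.eta_nablaxi, sub_zero]

lemma kf_add₁ (X X' Y : V) : S.kf (X + X') Y = S.kf X Y + S.kf X' Y := by
  unfold kf
  rw [S.d_addX, S.nabla_addX, map_add]
  ring

lemma kf_smul₁ (f : C) (X Y : V) : S.kf (f • X) Y = f * S.kf X Y := by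
  unfold kf
  rw [S.d_smulX, S.nabla_smulX, map_smul, smul_eq_mul]
  ring

lemma kf_add₂ (X Y Y' : V) : S.kf X (Y + Y') = S.kf X Y + S.kf X Y' := by
  unfold kf
  rw [map_add, S.d_add, S.nabla_addY, map_add]
  ring

lemma kf_smul₂ (f : C) (X Y : V) : S.kf X (f • Y) = f * S.kf X Y := by
  unfold kf
  rw [map_smul, smul_eq_mul, S.d_mul, S.nabla_leibniz, map_add, map_smul, map_smul,
    smul_eq_mul, smul_eq_mul]
  ring

lemma lie_eta (X : V) : S.d S.ξ (S.η X) = S.η (S.bracket S.ξ X) := by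
  have h1 : S.kf S.ξ X = 0 := S.kf_xi₁ X
  unfold kf at h1
  rw [S.bracket_eq, map_sub, S.eta_nablaxi, sub_zero]
  linear_combination h1

lemma phi_rsmul (r : ℝ) (X : V) : S.φ (r • X) = r • S.φ X := by
  rw [← algebraMap_smul C r X, map_smul, algebraMap_smul]

lemma hTen_xi : S.hTen S.ξ = 0 := by
  unfold hTen
  rw [S.phi_xi, S.bracket_zero₂, S.bracket_self, map_zero, sub_zero, smul_zero]

lemma hTen_phi (X : V) : S.hTen (S.φ X) = - S.φ (S.hTen X) := by
  have key : S.hTen (S.φ X) + S.φ (S.hTen X) = 0 := by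
    unfold hTen
    rw [phi_rsmul, map_sub, ← smul_add]
    have hre : S.bracket S.ξ (S.φ (S.φ X)) - S.φ (S.bracket S.ξ (S.φ X))
        + (S.φ (S.bracket S.ξ (S.φ X)) - S.φ (S.φ (S.bracket S.ξ X)))
        = S.bracket S.ξ (S.φ (S.φ X)) - S.φ (S.φ (S.bracket S.ξ X)) := by abel
    rw [hre]
    have h1 : S.bracket S.ξ (S.φ (S.φ X)) = - S.bracket S.ξ X + S.η (S.bracket S.ξ X) • S.ξ := by
      rw [S.φ_sq X, S.bracket_add₂, S.bracket_neg₂, S.bracket_smul₂, S.bracket_self,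
        smul_zero, add_zero, S.lie_eta]
    have h2 : S.φ (S.φ (S.bracket S.ξ X)) = - S.bracket S.ξ X + S.η (S.bracket S.ξ X) • S.ξ :=
      S.φ_sq _
    rw [h1, h2, sub_self, smul_zero]
  have : S.hTen (S.φ X) = - S.φ (S.hTen X) := by
    rw [eq_neg_iff_add_eq_zero]; exact key
  exact this

lemma hTen_add (X Y : V) : S.hTen (X + Y) = S.hTen X + S.hTen Y := by
  unfold hTen
  rw [map_add, S.bracket_add₂, S.bracket_add₂, map_add, ← smul_add]
  congr 1
  abel

lemma hTen_smul (f : C) (X : V) : S.hTen (f • X) = f • S.hTen X := by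
  unfold hTen
  rw [map_smul, S.bracket_smul₂, S.bracket_smul₂, map_add, map_smul, map_smul]
  have h : S.d S.ξ f • S.φ X + f • S.bracket S.ξ (S.φ X)
      - (S.d S.ξ f • S.φ X + f • S.φ (S.bracket S.ξ X))
      = f • (S.bracket S.ξ (S.φ X) - S.φ (S.bracket S.ξ X)) := by
    rw [smul_sub]; abel
  rw [h, rsmul_comm]

end ContactSetup
end Aux3

section Aux4
variable {C : Type} [CommRing C] [Algebra ℝ C]
  {V : Type} [AddCommGroup V] [Module ℝ V] [Module C V] [IsScalarTower ℝ C V]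
  {n : ℕ} (S : ContactSetup C V n)
namespace ContactSetup

/-- trace is cyclic for C-linear operators -/
lemma tr_cyclic (F G : V → V)
    (hFa : ∀ x y, F (x + y) = F x + F y) (hFs : ∀ (f : C) x, F (f • x) = f • F x)
    (hGa : ∀ x y, G (x + y) = G x + G y) (hGs : ∀ (f : C) x, G (f • x) = f • G x) :
    ∑ i, S.sgn i • S.g (F (G (S.e i))) (S.e i) = ∑ i, S.sgn i • S.g (G (F (S.e i))) (S.e i) := by
  have e1 : ∀ i, S.g (F (G (S.e i))) (S.e i)
      = ∑ k, S.sgn k • (S.g (G (S.e i)) (S.e k) * S.g (F (S.e k)) (S.e i)) := by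
    intro i
    conv_lhs => rw [S.e_complete (G (S.e i))]
    rw [apply_sum F hFa,
      apply_sum (fun v => S.g v (S.e i)) (fun a b => S.g_add₁ a b (S.e i))]
    refine Finset.sum_congr rfl (fun k _ => ?_)
    simp only [hFs]
    rw [S.g_smul₁, smul_mul_assoc]
  have e2 : ∀ k, S.g (G (F (S.e k))) (S.e k)
      = ∑ i, S.sgn i • (S.g (F (S.e k)) (S.e i) * S.g (G (S.e i)) (S.e k)) := by
    intro k
    conv_lhs => rw [S.e_complete (F (S.e k))]
    rw [apply_sum G hGa,
      apply_sum (fun v => S.g v (S.e k)) (fun a b => S.g_add₁ a b (S.e k))]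
    refine Finset.sum_congr rfl (fun i _ => ?_)
    simp only [hGs]
    rw [S.g_smul₁, smul_mul_assoc]
  calc ∑ i, S.sgn i • S.g (F (G (S.e i))) (S.e i)
      = ∑ i, ∑ k, S.sgn i • (S.sgn k • (S.g (G (S.e i)) (S.e k) * S.g (F (S.e k)) (S.e i))) := by
        refine Finset.sum_congr rfl (fun i _ => ?_)
        rw [e1 i, Finset.smul_sum]
    _ = ∑ k, ∑ i, S.sgn k • (S.sgn i • (S.g (F (S.e k)) (S.e i) * S.g (G (S.e i)) (S.e k))) := by
        rw [Finset.sum_comm]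
        refine Finset.sum_congr rfl (fun k _ => Finset.sum_congr rfl (fun i _ => ?_))
        rw [smul_comm (S.sgn k) (S.sgn i), mul_comm]
    _ = ∑ k, S.sgn k • S.g (G (F (S.e k))) (S.e k) := by
        refine Finset.sum_congr rfl (fun k _ => ?_)
        rw [e2 k, Finset.smul_sum]

lemma tr_phi : ∑ i, S.sgn i • S.g (S.φ (S.e i)) (S.e i) = 0 := by
  refine Finset.sum_eq_zero (fun i _ => ?_)
  have h : S.g (S.φ (S.e i)) (S.e i) = 0 := by
    apply half_cancel
    have h1 := S.phi_skew (S.e i) (S.e i)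
    have h2 := S.g_symm (S.e i) (S.φ (S.e i))
    linear_combination h1 - h2
  rw [h, smul_zero]

lemma tr_phih : ∑ i, S.sgn i • S.g (S.φ (S.hTen (S.e i))) (S.e i) = 0 := by
  apply half_cancel
  have h := S.tr_cyclic (fun x => S.φ x) (fun x => S.hTen x)
    (fun x y => map_add _ x y) (fun f x => map_smul _ f x)
    (fun x y => S.hTen_add x y) (fun f x => S.hTen_smul f x)
  have h2 : ∑ i, S.sgn i • S.g (S.hTen (S.φ (S.e i))) (S.e i)
      = - ∑ i, S.sgn i • S.g (S.φ (S.hTen (S.e i))) (S.e i) := by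
    rw [← Finset.sum_neg_distrib]
    refine Finset.sum_congr rfl (fun i _ => ?_)
    rw [S.hTen_phi, map_neg, LinearMap.neg_apply, smul_neg]
  rw [h2] at h
  linear_combination h

lemma nabla_xi' (X : V) : S.nabla X S.ξ = -(S.ε • S.φ X) - S.φ (S.hTen X) := by
  rw [S.nabla_xi X]
  congr 1
  unfold hTen
  rw [phi_rsmul, map_sub]

lemma div_xi : ∑ i, S.sgn i • S.g (S.nabla (S.e i) S.ξ) (S.e i) = 0 := by
  have h : ∀ i, S.g (S.nabla (S.e i) S.ξ) (S.e i)
      = - (S.ε • S.g (S.φ (S.e i)) (S.e i)) - S.g (S.φ (S.hTen (S.e i))) (S.e i) := by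
    intro i
    rw [S.nabla_xi' (S.e i), S.g_sub₁, S.g_neg₁, S.g_rsmul₁]
  calc ∑ i, S.sgn i • S.g (S.nabla (S.e i) S.ξ) (S.e i)
      = ∑ i, (-(S.ε • (S.sgn i • S.g (S.φ (S.e i)) (S.e i)))
          - S.sgn i • S.g (S.φ (S.hTen (S.e i))) (S.e i)) := by
        refine Finset.sum_congr rfl (fun i _ => ?_)
        rw [h i, smul_sub, smul_neg, smul_comm (S.sgn i) S.ε]
    _ = -(S.ε • ∑ i, S.sgn i • S.g (S.φ (S.e i)) (S.e i))
          - ∑ i, S.sgn i • S.g (S.φ (S.hTen (S.e i))) (S.e i) := by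
        rw [Finset.sum_sub_distrib, Finset.sum_neg_distrib, Finset.smul_sum]
    _ = 0 := by rw [S.tr_phi, S.tr_phih, smul_zero, neg_zero, sub_zero]

lemma tr_kf : ∑ i, S.sgn i • S.kf (S.e i) (S.e i) = 0 := by
  have h : ∀ i, S.sgn i • S.kf (S.e i) (S.e i)
      = S.ε • (S.sgn i • S.g (S.nabla (S.e i) S.ξ) (S.e i)) := by
    intro i
    rw [S.kf_eq, smul_comm (S.sgn i) S.ε]
  rw [Finset.sum_congr rfl (fun i _ => h i), ← Finset.smul_sum, S.div_xi, smul_zero]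

/-- curvature: skew in first two slots -/
lemma R_skew12 (X Y Z : V) : S.R X Y Z = - S.R Y X Z := by
  unfold R
  have h : S.bracket X Y = - S.bracket Y X := by rw [S.bracket_eq, S.bracket_eq]; abel
  rw [h, S.nabla_neg₁]
  abel

lemma R_self (X Z : V) : S.R X X Z = 0 := by
  unfold R
  rw [S.bracket_self, S.nabla_zero₁]
  abel

lemma R_add₂ (X Y Y' Z : V) : S.R X (Y + Y') Z = S.R X Y Z + S.R X Y' Z := by
  unfold R
  rw [S.nabla_addX Y Y' Z, S.nabla_addY, S.nabla_addX Y Y' (S.nabla X Z),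
    S.bracket_add₂, S.nabla_addX]
  abel

lemma R_smul₂ (X : V) (f : C) (Y Z : V) : S.R X (f • Y) Z = f • S.R X Y Z := by
  unfold R
  rw [S.nabla_smulX f Y Z, S.nabla_leibniz, S.nabla_smulX f Y (S.nabla X Z),
    S.bracket_smul₂, S.nabla_addX, S.nabla_smulX (S.d X f) Y Z,
    S.nabla_smulX f (S.bracket X Y) Z, smul_sub, smul_sub]
  abel

lemma R_add₁ (X X' Y Z : V) : S.R (X + X') Y Z = S.R X Y Z + S.R X' Y Z := by
  rw [S.R_skew12, S.R_add₂, S.R_skew12 Y X Z, S.R_skew12 Y X' Z]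
  abel

lemma R_smul₁ (f : C) (X Y Z : V) : S.R (f • X) Y Z = f • S.R X Y Z := by
  rw [S.R_skew12, S.R_smul₂, S.R_skew12 Y X Z, smul_neg, neg_neg]

/-- curvature: skew in last two slots (uses `bracket_apply`) -/
lemma g_R_skew34 (X Y Z U : V) : S.g (S.R X Y Z) U = - S.g (S.R X Y U) Z := by
  have hb := S.bracket_apply X Y (S.g Z U)
  have e1 : S.d X (S.d Y (S.g Z U))
      = S.g (S.nabla X (S.nabla Y Z)) U + S.g (S.nabla Y Z) (S.nabla X U)
        + (S.g (S.nabla X Z) (S.nabla Y U) + S.g Z (S.nabla X (S.nabla Y U))) := by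
    rw [S.nabla_metric Y Z U, S.d_add, S.nabla_metric X (S.nabla Y Z) U,
      S.nabla_metric X Z (S.nabla Y U)]
  have e2 : S.d Y (S.d X (S.g Z U))
      = S.g (S.nabla Y (S.nabla X Z)) U + S.g (S.nabla X Z) (S.nabla Y U)
        + (S.g (S.nabla Y Z) (S.nabla X U) + S.g Z (S.nabla Y (S.nabla X U))) := by
    rw [S.nabla_metric X Z U, S.d_add, S.nabla_metric Y (S.nabla X Z) U,
      S.nabla_metric Y Z (S.nabla X U)]
  have e3 : S.d (S.bracket X Y) (S.g Z U)
      = S.g (S.nabla (S.bracket X Y) Z) U + S.g Z (S.nabla (S.bracket X Y) U) :=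
    S.nabla_metric _ Z U
  have hRg : S.g (S.R X Y Z) U
      = S.g (S.nabla X (S.nabla Y Z)) U - S.g (S.nabla Y (S.nabla X Z)) U
        - S.g (S.nabla (S.bracket X Y) Z) U := by
    unfold R
    rw [map_sub, map_sub]
    simp [LinearMap.sub_apply]
  have hRg2 : S.g (S.R X Y U) Z
      = S.g (S.nabla X (S.nabla Y U)) Z - S.g (S.nabla Y (S.nabla X U)) Z
        - S.g (S.nabla (S.bracket X Y) U) Z := by
    unfold R
    rw [map_sub, map_sub]
    simp [LinearMap.sub_apply]
  have hsym1 : S.g Z (S.nabla X (S.nabla Y U)) = S.g (S.nabla X (S.nabla Y U)) Z := S.g_symm _ _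
  have hsym2 : S.g Z (S.nabla Y (S.nabla X U)) = S.g (S.nabla Y (S.nabla X U)) Z := S.g_symm _ _
  have hsym3 : S.g Z (S.nabla (S.bracket X Y) U) = S.g (S.nabla (S.bracket X Y) U) Z := S.g_symm _ _
  rw [e1, e2, e3] at hb
  rw [hRg, hRg2]
  linear_combination -hb - hsym1 + hsym2 + hsym3

end ContactSetup
end Aux4

section Aux5
variable {C : Type} [CommRing C] [Algebra ℝ C]
  {V : Type} [AddCommGroup V] [Module ℝ V] [Module C V] [IsScalarTower ℝ C V]
  {n : ℕ} (S : ContactSetup C V n)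

/-- second covariant derivative of W -/
def ContactSetup.Bf (W X Y : V) : V :=
  S.nabla X (S.nabla Y W) - S.nabla (S.nabla X Y) W

def ContactSetup.Bhat (W X Y Z : V) : C := S.g (S.Bf W X Y) Z

def ContactSetup.D1f (W X Y Z : V) : C := S.g (S.R X Y W) Z

/-- covariant derivative operator on (0,3)-tensors given by functions -/
def ContactSetup.Dop (F : V → V → V → C) (U X Y Z : V) : C :=
  S.d U (F X Y Z) - F (S.nabla U X) Y Z - F X (S.nabla U Y) Z - F X Y (S.nabla U Z)

namespace ContactSetup

lemma g_zero₁ (y : V) : S.g 0 y = 0 := by rw [map_zero, LinearMap.zero_apply]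

lemma d_neg (X : V) (f : C) : S.d X (-f) = - S.d X f := by
  have h := S.d_sub X 0 f
  simpa [S.d_zero] using h

lemma d_sum (U : V) (f : Fin (2*n+1) → C) :
    S.d U (∑ i, S.sgn i • f i) = ∑ i, S.sgn i • S.d U (f i) := by
  rw [apply_sum (S.d U) (S.d_add U)]
  exact Finset.sum_congr rfl (fun i _ => S.d_rsmul U (S.sgn i) (f i))

-- linearity of D1f
lemma D1f_add₁ (W x x' y z : V) : S.D1f W (x + x') y z = S.D1f W x y z + S.D1f W x' y z := by
  unfold D1f; rw [S.R_add₁, S.g_add₁]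
lemma D1f_smul₁ (W : V) (f : C) (x y z : V) : S.D1f W (f • x) y z = f * S.D1f W x y z := by
  unfold D1f; rw [S.R_smul₁, S.g_smul₁]
lemma D1f_add₂ (W x y y' z : V) : S.D1f W x (y + y') z = S.D1f W x y z + S.D1f W x y' z := by
  unfold D1f; rw [S.R_add₂, S.g_add₁]
lemma D1f_smul₂ (W : V) (f : C) (x y z : V) : S.D1f W x (f • y) z = f * S.D1f W x y z := by
  unfold D1f; rw [S.R_smul₂, S.g_smul₁]
lemma D1f_add₃ (W x y z z' : V) : S.D1f W x y (z + z') = S.D1f W x y z + S.D1f W x y z' := by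
  unfold D1f; rw [S.g_add₂]
lemma D1f_smul₃ (W : V) (f : C) (x y z : V) : S.D1f W x y (f • z) = f * S.D1f W x y z := by
  unfold D1f; rw [S.g_smul₂]

/-- the Φ-contraction: the Ricci tensor itself -/
lemma Phi_con (W Y : V) : ∑ i, S.sgn i • S.D1f W (S.e i) Y (S.e i) = S.Ric Y W := rfl

/-- the κ-contraction -/
lemma kappa_con (W X : V) : ∑ i, S.sgn i • S.D1f W X (S.e i) (S.e i) = - S.Ric X W := by
  have h : ∀ i, S.sgn i • S.D1f W X (S.e i) (S.e i)
      = - (S.sgn i • S.g (S.R (S.e i) X W) (S.e i)) := by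
    intro i; unfold D1f; rw [S.R_skew12, S.g_neg₁, smul_neg]
  rw [Finset.sum_congr rfl (fun i _ => h i), Finset.sum_neg_distrib]
  rfl

lemma D1f_diag (W : V) (j : Fin (2*n+1)) (Z : V) : S.D1f W (S.e j) (S.e j) Z = 0 := by
  unfold D1f; rw [S.R_self, S.g_zero₁]

/-- split a Dop-sum into its four pieces -/
lemma dop_split (F : V → V → V → C) (X Y Z : Fin (2*n+1) → V) (U : V) :
    ∑ j, S.sgn j • S.Dop F U (X j) (Y j) (Z j)
      = ∑ j, S.sgn j • S.d U (F (X j) (Y j) (Z j))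
        - ∑ j, S.sgn j • F (S.nabla U (X j)) (Y j) (Z j)
        - ∑ j, S.sgn j • F (X j) (S.nabla U (Y j)) (Z j)
        - ∑ j, S.sgn j • F (X j) (Y j) (S.nabla U (Z j)) := by
  rw [← Finset.sum_sub_distrib, ← Finset.sum_sub_distrib, ← Finset.sum_sub_distrib]
  refine Finset.sum_congr rfl (fun j _ => ?_)
  unfold Dop
  rw [smul_sub, smul_sub, smul_sub]

lemma V1 (W U Z : V) : ∑ j, S.sgn j • S.Dop (S.D1f W) U (S.e j) (S.e j) Z = 0 := by
  rw [S.dop_split (S.D1f W) (fun j => S.e j) (fun j => S.e j) (fun _ => Z) U]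
  have c12 : ∑ j, S.sgn j • S.D1f W (S.nabla U (S.e j)) (S.e j) Z
      + ∑ j, S.sgn j • S.D1f W (S.e j) (S.nabla U (S.e j)) Z = 0 := by
    rw [← Finset.sum_add_distrib]
    have := S.con1 (fun x y => S.D1f W x y Z) (fun a b c => S.D1f_add₁ W a b c Z)
      (fun f a c => S.D1f_smul₁ W f a c Z) (fun a b c => S.D1f_add₂ W a b c Z)
      (fun f a c => S.D1f_smul₂ W f a c Z) U
    simpa [smul_add] using this
  have t1 : ∑ j, S.sgn j • S.d U (S.D1f W (S.e j) (S.e j) Z) = 0 := by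
    refine Finset.sum_eq_zero (fun j _ => ?_)
    rw [S.D1f_diag, S.d_zero, smul_zero]
  have t3 : ∑ j, S.sgn j • S.D1f W (S.e j) (S.e j) (S.nabla U Z) = 0 := by
    refine Finset.sum_eq_zero (fun j _ => ?_)
    rw [S.D1f_diag, smul_zero]
  rw [t1, t3]
  linear_combination - c12

lemma V2 (W U Y : V) : ∑ i, S.sgn i • S.Dop (S.D1f W) U (S.e i) Y (S.e i)
    = S.d U (S.Ric Y W) - S.Ric (S.nabla U Y) W := by
  rw [S.dop_split (S.D1f W) (fun i => S.e i) (fun _ => Y) (fun i => S.e i) U]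
  have c13 : ∑ i, S.sgn i • S.D1f W (S.nabla U (S.e i)) Y (S.e i)
      + ∑ i, S.sgn i • S.D1f W (S.e i) Y (S.nabla U (S.e i)) = 0 := by
    rw [← Finset.sum_add_distrib]
    have := S.con1 (fun x z => S.D1f W x Y z) (fun a b c => S.D1f_add₁ W a b Y c)
      (fun f a c => S.D1f_smul₁ W f a Y c) (fun a b c => S.D1f_add₃ W a Y b c)
      (fun f a c => S.D1f_smul₃ W f a Y c) U
    simpa [smul_add] using this
  have t1 : ∑ i, S.sgn i • S.d U (S.D1f W (S.e i) Y (S.e i)) = S.d U (S.Ric Y W) := by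
    rw [← S.d_sum, S.Phi_con]
  have t3 : ∑ i, S.sgn i • S.D1f W (S.e i) (S.nabla U Y) (S.e i) = S.Ric (S.nabla U Y) W :=
    S.Phi_con W (S.nabla U Y)
  rw [t1, t3]
  linear_combination - c13

lemma V3 (W U X : V) : ∑ i, S.sgn i • S.Dop (S.D1f W) U X (S.e i) (S.e i)
    = - (S.d U (S.Ric X W) - S.Ric (S.nabla U X) W) := by
  rw [S.dop_split (S.D1f W) (fun _ => X) (fun i => S.e i) (fun i => S.e i) U]
  have c23 : ∑ i, S.sgn i • S.D1f W X (S.nabla U (S.e i)) (S.e i)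
      + ∑ i, S.sgn i • S.D1f W X (S.e i) (S.nabla U (S.e i)) = 0 := by
    rw [← Finset.sum_add_distrib]
    have := S.con1 (fun y z => S.D1f W X y z) (fun a b c => S.D1f_add₂ W X a b c)
      (fun f a c => S.D1f_smul₂ W f X a c) (fun a b c => S.D1f_add₃ W X a b c)
      (fun f a c => S.D1f_smul₃ W f X a c) U
    simpa [smul_add] using this
  have t1 : ∑ i, S.sgn i • S.d U (S.D1f W X (S.e i) (S.e i)) = - S.d U (S.Ric X W) := by
    rw [← S.d_sum, S.kappa_con, S.d_neg]
  have t2 : ∑ i, S.sgn i • S.D1f W (S.nabla U X) (S.e i) (S.e i) = - S.Ric (S.nabla U X) W :=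
    S.kappa_con W (S.nabla U X)
  rw [t1, t2]
  linear_combination - c23

end ContactSetup
end Aux5

section Aux6
variable {C : Type} [CommRing C] [Algebra ℝ C]
  {V : Type} [AddCommGroup V] [Module ℝ V] [Module C V] [IsScalarTower ℝ C V]
  {n : ℕ} (S : ContactSetup C V n)

/-- the η-Einstein style symmetric 2-tensor `c g + m η⊗η` -/
def ContactSetup.hcm (c m : ℝ) (X Y : V) : C := c • S.g X Y + m • (S.η X * S.η Y)

/-- covariant derivative of `hcm` -/
def ContactSetup.Dh (c m : ℝ) (U Y Z : V) : C :=
  S.d U (S.hcm c m Y Z) - S.hcm c m (S.nabla U Y) Z - S.hcm c m Y (S.nabla U Z)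

namespace ContactSetup

lemma eta_nabla (U Y : V) : S.η (S.nabla U Y) = S.d U (S.η Y) - S.kf U Y := by
  unfold kf; ring

lemma Dh_eval (c m : ℝ) (U Y Z : V) :
    S.Dh c m U Y Z = m • (S.kf U Y * S.η Z + S.η Y * S.kf U Z) := by
  unfold Dh hcm
  rw [S.d_add, S.d_rsmul, S.d_rsmul, S.d_mul, S.nabla_metric U Y Z,
    S.eta_nabla U Y, S.eta_nabla U Z]
  simp only [Algebra.smul_def]
  ring

lemma Dh_add₁ (c m : ℝ) (x x' y z : V) :
    S.Dh c m (x + x') y z = S.Dh c m x y z + S.Dh c m x' y z := by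
  simp only [S.Dh_eval, S.kf_add₁]
  simp only [Algebra.smul_def]; ring

lemma Dh_smul₁ (c m : ℝ) (f : C) (x y z : V) :
    S.Dh c m (f • x) y z = f * S.Dh c m x y z := by
  simp only [S.Dh_eval, S.kf_smul₁]
  simp only [Algebra.smul_def]; ring

lemma Dh_add₂ (c m : ℝ) (x y y' z : V) :
    S.Dh c m x (y + y') z = S.Dh c m x y z + S.Dh c m x y' z := by
  simp only [S.Dh_eval, S.kf_add₂, map_add]
  simp only [Algebra.smul_def]; ring

lemma Dh_smul₂ (c m : ℝ) (f : C) (x y z : V) :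
    S.Dh c m x (f • y) z = f * S.Dh c m x y z := by
  simp only [S.Dh_eval, S.kf_smul₂, map_smul, smul_eq_mul]
  simp only [Algebra.smul_def]; ring

lemma Dh_add₃ (c m : ℝ) (x y z z' : V) :
    S.Dh c m x y (z + z') = S.Dh c m x y z + S.Dh c m x y z' := by
  simp only [S.Dh_eval, S.kf_add₂, map_add]
  simp only [Algebra.smul_def]; ring

lemma Dh_smul₃ (c m : ℝ) (f : C) (x y z : V) :
    S.Dh c m x y (f • z) = f * S.Dh c m x y z := by
  simp only [S.Dh_eval, S.kf_smul₂, map_smul, smul_eq_mul]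
  simp only [Algebra.smul_def]; ring

lemma Dh_symm23 (c m : ℝ) (x y z : V) : S.Dh c m x y z = S.Dh c m x z y := by
  simp only [S.Dh_eval]
  simp only [Algebra.smul_def]; ring

lemma deltah (c m : ℝ) (Z : V) : ∑ j, S.sgn j • S.Dh c m (S.e j) (S.e j) Z = 0 := by
  have h : ∀ j, S.sgn j • S.Dh c m (S.e j) (S.e j) Z
      = m • (S.sgn j • S.kf (S.e j) (S.e j) * S.η Z
          + S.sgn j • (S.η (S.e j) * S.kf (S.e j) Z)) := by
    intro j
    rw [S.Dh_eval, smul_comm (S.sgn j) m, smul_add, smul_mul_assoc]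
  rw [Finset.sum_congr rfl (fun j _ => h j), ← Finset.smul_sum, Finset.sum_add_distrib,
    ← Finset.sum_mul, S.tr_kf, zero_mul, zero_add]
  rw [S.contract_eta (fun x => S.kf x Z) (fun a b => S.kf_add₁ a b Z)
    (fun f a => S.kf_smul₁ f a Z), S.kf_xi₁, smul_zero, smul_zero]

lemma thetah (c m : ℝ) (Vv : V) : ∑ j, S.sgn j • S.Dh c m Vv (S.e j) (S.e j) = 0 := by
  have h : ∀ j, S.sgn j • S.Dh c m Vv (S.e j) (S.e j)
      = m • (S.sgn j • (S.η (S.e j) * S.kf Vv (S.e j))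
          + S.sgn j • (S.η (S.e j) * S.kf Vv (S.e j))) := by
    intro j
    rw [S.Dh_eval, smul_comm (S.sgn j) m, smul_add]
    congr 2
    rw [mul_comm]
  rw [Finset.sum_congr rfl (fun j _ => h j), ← Finset.smul_sum, Finset.sum_add_distrib,
    S.contract_eta (fun x => S.kf Vv x) (fun a b => S.kf_add₂ Vv a b)
      (fun f a => S.kf_smul₂ f Vv a), S.kf_xi₂, smul_zero, add_zero, smul_zero]

lemma W2 (c m : ℝ) (U Z : V) :
    ∑ j, S.sgn j • S.Dop (S.Dh c m) U (S.e j) (S.e j) Z = 0 := by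
  rw [S.dop_split (S.Dh c m) (fun j => S.e j) (fun j => S.e j) (fun _ => Z) U]
  have c12 : ∑ j, S.sgn j • S.Dh c m (S.nabla U (S.e j)) (S.e j) Z
      + ∑ j, S.sgn j • S.Dh c m (S.e j) (S.nabla U (S.e j)) Z = 0 := by
    rw [← Finset.sum_add_distrib]
    have := S.con1 (fun x y => S.Dh c m x y Z) (fun a b c' => S.Dh_add₁ c m a b c' Z)
      (fun f a c' => S.Dh_smul₁ c m f a c' Z) (fun a b c' => S.Dh_add₂ c m a b c' Z)
      (fun f a c' => S.Dh_smul₂ c m f a c' Z) U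
    simpa [smul_add] using this
  have t1 : ∑ j, S.sgn j • S.d U (S.Dh c m (S.e j) (S.e j) Z) = 0 := by
    rw [← S.d_sum, S.deltah, S.d_zero]
  have t4 : ∑ j, S.sgn j • S.Dh c m (S.e j) (S.e j) (S.nabla U Z) = 0 := S.deltah c m _
  rw [t1, t4]
  linear_combination - c12

lemma W1 (c m : ℝ) (U Vv : V) :
    ∑ j, S.sgn j • S.Dop (S.Dh c m) U Vv (S.e j) (S.e j) = 0 := by
  rw [S.dop_split (S.Dh c m) (fun _ => Vv) (fun j => S.e j) (fun j => S.e j) U]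
  have c34 : ∑ j, S.sgn j • S.Dh c m Vv (S.nabla U (S.e j)) (S.e j)
      + ∑ j, S.sgn j • S.Dh c m Vv (S.e j) (S.nabla U (S.e j)) = 0 := by
    rw [← Finset.sum_add_distrib]
    have := S.con1 (fun y z => S.Dh c m Vv y z) (fun a b c' => S.Dh_add₂ c m Vv a b c')
      (fun f a c' => S.Dh_smul₂ c m f Vv a c') (fun a b c' => S.Dh_add₃ c m Vv a b c')
      (fun f a c' => S.Dh_smul₃ c m f Vv a c') U
    simpa [smul_add] using this
  have t1 : ∑ j, S.sgn j • S.d U (S.Dh c m Vv (S.e j) (S.e j)) = 0 := by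
    rw [← S.d_sum, S.thetah, S.d_zero]
  have t2 : ∑ j, S.sgn j • S.Dh c m (S.nabla U Vv) (S.e j) (S.e j) = 0 := S.thetah c m _
  rw [t1, t2]
  linear_combination - c34

lemma DopDh_symm34 (c m : ℝ) (U Vv Y Z : V) :
    S.Dop (S.Dh c m) U Vv Y Z = S.Dop (S.Dh c m) U Vv Z Y := by
  unfold Dop
  rw [S.Dh_symm23 c m Vv Y Z, S.Dh_symm23 c m (S.nabla U Vv) Y Z,
    S.Dh_symm23 c m Vv (S.nabla U Y) Z, S.Dh_symm23 c m Vv Y (S.nabla U Z)]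
  ring

end ContactSetup

/-- symmetrized derivative (Yano-type combination) -/
def ContactSetup.Hsf (c m : ℝ) (X Y Z : V) : C :=
  S.Dh c m X Y Z + S.Dh c m Y X Z - S.Dh c m Z X Y

/-- the master double contraction -/
def ContactSetup.SIG (F : V → V → V → C) : C :=
  ∑ i, ∑ j, (S.sgn i * S.sgn j) •
    (S.Dop F (S.e i) (S.e j) (S.e j) (S.e i) - S.Dop F (S.e j) (S.e i) (S.e j) (S.e i))

namespace ContactSetup

lemma SIG_eq (F : V → V → V → C) : S.SIG F
    = (∑ i, S.sgn i • ∑ j, S.sgn j • S.Dop F (S.e i) (S.e j) (S.e j) (S.e i))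
      - (∑ j, S.sgn j • ∑ i, S.sgn i • S.Dop F (S.e j) (S.e i) (S.e j) (S.e i)) := by
  unfold SIG
  have h : ∀ i j, (S.sgn i * S.sgn j) •
      (S.Dop F (S.e i) (S.e j) (S.e j) (S.e i) - S.Dop F (S.e j) (S.e i) (S.e j) (S.e i))
      = S.sgn i • (S.sgn j • S.Dop F (S.e i) (S.e j) (S.e j) (S.e i))
        - S.sgn j • (S.sgn i • S.Dop F (S.e j) (S.e i) (S.e j) (S.e i)) := by
    intro i j
    rw [smul_sub, mul_smul]
    congr 1
    rw [mul_comm, mul_smul]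
  calc ∑ i, ∑ j, (S.sgn i * S.sgn j) •
      (S.Dop F (S.e i) (S.e j) (S.e j) (S.e i) - S.Dop F (S.e j) (S.e i) (S.e j) (S.e i))
      = ∑ i, ∑ j, (S.sgn i • (S.sgn j • S.Dop F (S.e i) (S.e j) (S.e j) (S.e i))
          - S.sgn j • (S.sgn i • S.Dop F (S.e j) (S.e i) (S.e j) (S.e i))) := by
        exact Finset.sum_congr rfl (fun i _ => Finset.sum_congr rfl (fun j _ => h i j))
    _ = (∑ i, ∑ j, S.sgn i • (S.sgn j • S.Dop F (S.e i) (S.e j) (S.e j) (S.e i)))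
          - ∑ i, ∑ j, S.sgn j • (S.sgn i • S.Dop F (S.e j) (S.e i) (S.e j) (S.e i)) := by
        rw [← Finset.sum_sub_distrib]
        exact Finset.sum_congr rfl (fun i _ => by rw [← Finset.sum_sub_distrib])
    _ = (∑ i, S.sgn i • ∑ j, S.sgn j • S.Dop F (S.e i) (S.e j) (S.e j) (S.e i))
          - ∑ j, ∑ i, S.sgn j • (S.sgn i • S.Dop F (S.e j) (S.e i) (S.e j) (S.e i)) := by
        rw [Finset.sum_comm (f := fun i j => S.sgn j • (S.sgn i • S.Dop F (S.e j) (S.e i) (S.e j) (S.e i)))]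
        congr 1
        exact Finset.sum_congr rfl (fun i _ => (Finset.smul_sum).symm)
    _ = _ := by
        congr 1
        exact Finset.sum_congr rfl (fun j _ => (Finset.smul_sum).symm)

lemma SIG_Hs (c m : ℝ) : S.SIG (S.Hsf c m) = 0 := by
  have hDop : ∀ U X Y Z, S.Dop (S.Hsf c m) U X Y Z
      = S.Dop (S.Dh c m) U X Y Z + S.Dop (S.Dh c m) U Y X Z - S.Dop (S.Dh c m) U Z X Y := by
    intro U X Y Z
    unfold Dop Hsf
    rw [S.d_sub, S.d_add]
    ring
  rw [S.SIG_eq]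
  have first : ∀ i, ∑ j, S.sgn j • S.Dop (S.Hsf c m) (S.e i) (S.e j) (S.e j) (S.e i) = 0 := by
    intro i
    have h : ∀ j, S.sgn j • S.Dop (S.Hsf c m) (S.e i) (S.e j) (S.e j) (S.e i)
        = S.sgn j • S.Dop (S.Dh c m) (S.e i) (S.e j) (S.e j) (S.e i)
          + S.sgn j • S.Dop (S.Dh c m) (S.e i) (S.e j) (S.e j) (S.e i)
          - S.sgn j • S.Dop (S.Dh c m) (S.e i) (S.e i) (S.e j) (S.e j) := by
      intro j
      rw [hDop, smul_sub, smul_add]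
    rw [Finset.sum_congr rfl (fun j _ => h j), Finset.sum_sub_distrib, Finset.sum_add_distrib,
      S.W2, S.W1, add_zero, sub_zero]
  have second : ∀ j, ∑ i, S.sgn i • S.Dop (S.Hsf c m) (S.e j) (S.e i) (S.e j) (S.e i) = 0 := by
    intro j
    have h : ∀ i, S.sgn i • S.Dop (S.Hsf c m) (S.e j) (S.e i) (S.e j) (S.e i)
        = S.sgn i • S.Dop (S.Dh c m) (S.e j) (S.e i) (S.e i) (S.e j)
          + S.sgn i • S.Dop (S.Dh c m) (S.e j) (S.e j) (S.e i) (S.e i)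
          - S.sgn i • S.Dop (S.Dh c m) (S.e j) (S.e i) (S.e i) (S.e j) := by
      intro i
      rw [hDop, smul_sub, smul_add, S.DopDh_symm34 c m (S.e j) (S.e i) (S.e j) (S.e i)]
    rw [Finset.sum_congr rfl (fun i _ => h i), Finset.sum_sub_distrib, Finset.sum_add_distrib,
      S.W2, S.W1, add_zero, sub_self]
  have A1 : (∑ i, S.sgn i • ∑ j, S.sgn j • S.Dop (S.Hsf c m) (S.e i) (S.e j) (S.e j) (S.e i)) = 0 :=
    Finset.sum_eq_zero (fun i _ => by rw [first i, smul_zero])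
  have A2 : (∑ j, S.sgn j • ∑ i, S.sgn i • S.Dop (S.Hsf c m) (S.e j) (S.e i) (S.e j) (S.e i)) = 0 :=
    Finset.sum_eq_zero (fun j _ => by rw [second j, smul_zero])
  rw [A1, A2, sub_zero]

end ContactSetup
end Aux6

section Aux7
variable {C : Type} [CommRing C] [Algebra ℝ C]
  {V : Type} [AddCommGroup V] [Module ℝ V] [Module C V] [IsScalarTower ℝ C V]
  {n : ℕ} (S : ContactSetup C V n)

/-- trace of ∇W -/
def ContactSetup.trA (W : V) : C := ∑ i, S.sgn i • S.g (S.e i) (S.nabla (S.e i) W)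

namespace ContactSetup

lemma B_antisym (W X Y : V) : S.Bf W X Y - S.Bf W Y X = S.R X Y W := by
  simp only [Bf, R, S.bracket_eq, S.nabla_sub₁]
  abel

lemma RicciId (W U X Y : V) :
    (S.nabla U (S.Bf W X Y) - S.Bf W (S.nabla U X) Y - S.Bf W X (S.nabla U Y))
      - (S.nabla X (S.Bf W U Y) - S.Bf W (S.nabla X U) Y - S.Bf W U (S.nabla X Y))
    = S.R U X (S.nabla Y W) - S.nabla (S.R U X Y) W := by
  simp only [Bf, R, S.bracket_eq, S.nabla_sub₁, S.nabla_sub₂]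
  abel

lemma DopBhat (W U X Y Z : V) : S.Dop (S.Bhat W) U X Y Z
    = S.g (S.nabla U (S.Bf W X Y) - S.Bf W (S.nabla U X) Y - S.Bf W X (S.nabla U Y)) Z := by
  unfold Dop Bhat
  rw [S.nabla_metric U (S.Bf W X Y) Z, S.g_sub₁, S.g_sub₁]
  ring

lemma P2 (W U X Y Z : V) : S.Dop (S.Bhat W) U X Y Z - S.Dop (S.Bhat W) X U Y Z
    = S.g (S.R U X (S.nabla Y W)) Z - S.g (S.nabla (S.R U X Y) W) Z := by
  rw [S.DopBhat, S.DopBhat, ← S.g_sub₁, ← S.g_sub₁ (S.R U X (S.nabla Y W)), S.RicciId W U X Y]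

lemma eps_dxi (W : V) : S.ε • S.d S.ξ (S.η W) = S.g S.ξ (S.nabla S.ξ W) := by
  have h : S.d S.ξ (S.η W) = S.η (S.nabla S.ξ W) := by
    have hk := S.kf_xi₁ W
    unfold kf at hk
    linear_combination hk
  rw [h, ← S.g_xi]

/-- evaluation of the OG2 divergence sum -/
lemma OG2val (W : V) (a b : ℝ)
    (hRic : ∀ X Y : V, S.Ric X Y = a • S.g X Y + b • (S.η X * S.η Y)) :
    ∑ j, S.sgn j • (S.d (S.e j) (S.Ric (S.e j) W) - S.Ric (S.nabla (S.e j) (S.e j)) W)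
      = a • S.trA W + b • S.g S.ξ (S.nabla S.ξ W) := by
  have hterm : ∀ j, S.d (S.e j) (S.Ric (S.e j) W) - S.Ric (S.nabla (S.e j) (S.e j)) W
      = a • S.g (S.e j) (S.nabla (S.e j) W)
        + b • (S.kf (S.e j) (S.e j) * S.η W)
        + b • (S.η (S.e j) * S.d (S.e j) (S.η W)) := by
    intro j
    rw [hRic (S.e j) W, hRic (S.nabla (S.e j) (S.e j)) W]
    rw [S.d_add, S.d_rsmul, S.d_rsmul, S.d_mul, S.nabla_metric (S.e j) (S.e j) W,
      S.eta_nabla (S.e j) (S.e j)]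
    simp only [Algebra.smul_def]
    ring
  rw [Finset.sum_congr rfl (fun j _ => by rw [hterm j])]
  have split : ∀ j, S.sgn j • (a • S.g (S.e j) (S.nabla (S.e j) W)
      + b • (S.kf (S.e j) (S.e j) * S.η W)
      + b • (S.η (S.e j) * S.d (S.e j) (S.η W)))
      = a • (S.sgn j • S.g (S.e j) (S.nabla (S.e j) W))
        + b • (S.sgn j • S.kf (S.e j) (S.e j) * S.η W)
        + b • (S.sgn j • (S.η (S.e j) * S.d (S.e j) (S.η W))) := by
    intro j
    rw [smul_add, smul_add, smul_comm (S.sgn j) a, smul_comm (S.sgn j) b,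
      smul_comm (S.sgn j) b, smul_mul_assoc]
  rw [Finset.sum_congr rfl (fun j _ => split j), Finset.sum_add_distrib,
    Finset.sum_add_distrib, ← Finset.smul_sum, ← Finset.smul_sum, ← Finset.smul_sum]
  have h1 : (∑ j, S.sgn j • S.kf (S.e j) (S.e j) * S.η W) = 0 := by
    rw [← Finset.sum_mul, S.tr_kf, zero_mul]
  have h2 : (∑ j, S.sgn j • (S.η (S.e j) * S.d (S.e j) (S.η W))) = S.ε • S.d S.ξ (S.η W) :=
    S.contract_eta (fun x => S.d x (S.η W)) (fun x y => S.d_addX (S.η W) x y)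
      (fun f x => S.d_smulX f (S.η W) x)
  rw [h1, h2, smul_zero, add_zero, S.eps_dxi]
  rfl

/-- evaluation of K1 -/
lemma K1val (W : V) (a b : ℝ)
    (hRic : ∀ X Y : V, S.Ric X Y = a • S.g X Y + b • (S.η X * S.η Y)) :
    ∑ j, S.sgn j • S.Ric (S.e j) (S.nabla (S.e j) W)
    = a • S.trA W + b • S.g S.ξ (S.nabla S.ξ W) := by
  have hterm : ∀ j, S.sgn j • S.Ric (S.e j) (S.nabla (S.e j) W)
      = a • (S.sgn j • S.g (S.e j) (S.nabla (S.e j) W))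
        + b • (S.sgn j • (S.η (S.e j) * S.η (S.nabla (S.e j) W))) := by
    intro j
    rw [hRic, smul_add, smul_comm (S.sgn j) a, smul_comm (S.sgn j) b]
  rw [Finset.sum_congr rfl (fun j _ => hterm j), Finset.sum_add_distrib,
    ← Finset.smul_sum, ← Finset.smul_sum]
  have h2 : (∑ j, S.sgn j • (S.η (S.e j) * S.η (S.nabla (S.e j) W)))
      = S.ε • S.η (S.nabla S.ξ W) := by
    refine S.contract_eta (fun x => S.η (S.nabla x W)) (fun x y => ?_) (fun f x => ?_)
    · show S.η (S.nabla (x + y) W) = S.η (S.nabla x W) + S.η (S.nabla y W)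
      rw [S.nabla_addX, map_add]
    · show S.η (S.nabla (f • x) W) = f * S.η (S.nabla x W)
      rw [S.nabla_smulX, map_smul, smul_eq_mul]
  rw [h2]
  have h3 : b • (S.ε • S.η (S.nabla S.ξ W)) = b • S.g S.ξ (S.nabla S.ξ W) := by
    rw [← S.g_xi]
  rw [h3]
  rfl

/-- evaluation of K2 -/
lemma K2val (W : V) (a b : ℝ)
    (hRic : ∀ X Y : V, S.Ric X Y = a • S.g X Y + b • (S.η X * S.η Y)) :
    ∑ i, S.sgn i •
      (∑ j, S.sgn j • S.g (S.nabla (S.R (S.e i) (S.e j) (S.e j)) W) (S.e i))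
    = a • S.trA W + b • S.g S.ξ (S.nabla S.ξ W) := by
  have stepA : ∀ i j, S.g (S.nabla (S.R (S.e i) (S.e j) (S.e j)) W) (S.e i)
      = ∑ k, S.sgn k • (S.g (S.R (S.e j) (S.e i) (S.e k)) (S.e j)
          * S.g (S.nabla (S.e k) W) (S.e i)) := by
    intro i j
    set v := S.R (S.e i) (S.e j) (S.e j) with hv
    have hexp : S.nabla v W = ∑ k, (S.sgn k • S.g v (S.e k)) • S.nabla (S.e k) W := by
      refine (S.contract_vec (fun x => S.nabla x W) (fun x y => ?_) (fun f x => ?_) v).symm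
      · show S.nabla (x + y) W = S.nabla x W + S.nabla y W
        exact S.nabla_addX x y W
      · show S.nabla (f • x) W = f • S.nabla x W
        exact S.nabla_smulX f x W
    rw [hexp, apply_sum (fun x => S.g x (S.e i)) (fun p q => S.g_add₁ p q (S.e i))]
    refine Finset.sum_congr rfl (fun k _ => ?_)
    show S.g ((S.sgn k • S.g v (S.e k)) • S.nabla (S.e k) W) (S.e i) = _
    rw [S.g_smul₁, smul_mul_assoc]
    congr 2
    rw [hv, S.g_R_skew34, S.R_skew12, S.g_neg₁, neg_neg]
  have stepB : ∀ i, ∑ j, S.sgn j • S.g (S.nabla (S.R (S.e i) (S.e j) (S.e j)) W) (S.e i)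
      = ∑ k, S.sgn k • (S.Ric (S.e i) (S.e k) * S.g (S.nabla (S.e k) W) (S.e i)) := by
    intro i
    rw [Finset.sum_congr rfl (fun j _ => by rw [stepA i j])]
    have hswap : ∀ j k, S.sgn j • (S.sgn k • (S.g (S.R (S.e j) (S.e i) (S.e k)) (S.e j)
        * S.g (S.nabla (S.e k) W) (S.e i)))
        = S.sgn k • ((S.sgn j • S.g (S.R (S.e j) (S.e i) (S.e k)) (S.e j))
            * S.g (S.nabla (S.e k) W) (S.e i)) := by
      intro j k
      rw [smul_comm (S.sgn j) (S.sgn k), smul_mul_assoc]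
    calc ∑ j, S.sgn j • ∑ k, S.sgn k • (S.g (S.R (S.e j) (S.e i) (S.e k)) (S.e j)
          * S.g (S.nabla (S.e k) W) (S.e i))
        = ∑ j, ∑ k, S.sgn j • (S.sgn k • (S.g (S.R (S.e j) (S.e i) (S.e k)) (S.e j)
            * S.g (S.nabla (S.e k) W) (S.e i))) := by
          exact Finset.sum_congr rfl (fun j _ => Finset.smul_sum)
      _ = ∑ k, ∑ j, S.sgn k • ((S.sgn j • S.g (S.R (S.e j) (S.e i) (S.e k)) (S.e j))
            * S.g (S.nabla (S.e k) W) (S.e i)) := by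
          rw [Finset.sum_comm]
          exact Finset.sum_congr rfl (fun k _ => Finset.sum_congr rfl (fun j _ => hswap j k))
      _ = ∑ k, S.sgn k • (S.Ric (S.e i) (S.e k) * S.g (S.nabla (S.e k) W) (S.e i)) := by
          refine Finset.sum_congr rfl (fun k _ => ?_)
          rw [← Finset.smul_sum, ← Finset.sum_mul]
          rfl
  rw [Finset.sum_congr rfl (fun i _ => by rw [stepB i])]
  have stepC : ∀ i, ∑ k, S.sgn k • (S.Ric (S.e i) (S.e k) * S.g (S.nabla (S.e k) W) (S.e i))
      = a • S.g (S.nabla (S.e i) W) (S.e i)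
        + b • (S.ε • (S.η (S.e i) * S.g (S.nabla S.ξ W) (S.e i))) := by
    intro i
    have hterm : ∀ k, S.sgn k • (S.Ric (S.e i) (S.e k) * S.g (S.nabla (S.e k) W) (S.e i))
        = a • (S.sgn k • (S.g (S.e i) (S.e k) * S.g (S.nabla (S.e k) W) (S.e i)))
          + b • (S.sgn k • (S.η (S.e k) * (S.η (S.e i) * S.g (S.nabla (S.e k) W) (S.e i)))) := by
      intro k
      rw [hRic]
      rw [smul_comm a (S.sgn k), smul_comm b (S.sgn k), ← smul_add]
      congr 1
      simp only [Algebra.smul_def]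
      ring
    rw [Finset.sum_congr rfl (fun k _ => hterm k), Finset.sum_add_distrib,
      ← Finset.smul_sum, ← Finset.smul_sum]
    have hA : (∑ k, S.sgn k • (S.g (S.e i) (S.e k) * S.g (S.nabla (S.e k) W) (S.e i)))
        = S.g (S.nabla (S.e i) W) (S.e i) := by
      refine S.contract (fun x => S.g (S.nabla x W) (S.e i)) (fun x y => ?_) (fun f x => ?_)
        (S.e i)
      · show S.g (S.nabla (x + y) W) (S.e i) = _
        rw [S.nabla_addX, S.g_add₁]
      · show S.g (S.nabla (f • x) W) (S.e i) = f * S.g (S.nabla x W) (S.e i)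
        rw [S.nabla_smulX, S.g_smul₁]
    have hB : (∑ k, S.sgn k • (S.η (S.e k) * (S.η (S.e i) * S.g (S.nabla (S.e k) W) (S.e i))))
        = S.ε • (S.η (S.e i) * S.g (S.nabla S.ξ W) (S.e i)) := by
      refine S.contract_eta (fun x => S.η (S.e i) * S.g (S.nabla x W) (S.e i))
        (fun x y => ?_) (fun f x => ?_)
      · show S.η (S.e i) * S.g (S.nabla (x + y) W) (S.e i) = _
        rw [S.nabla_addX, S.g_add₁]; ring
      · show S.η (S.e i) * S.g (S.nabla (f • x) W) (S.e i)
            = f * (S.η (S.e i) * S.g (S.nabla x W) (S.e i))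
        rw [S.nabla_smulX, S.g_smul₁]; ring
    rw [hA, hB]
  rw [Finset.sum_congr rfl (fun i _ => by rw [stepC i])]
  have hsplit : ∀ i, S.sgn i • (a • S.g (S.nabla (S.e i) W) (S.e i)
      + b • (S.ε • (S.η (S.e i) * S.g (S.nabla S.ξ W) (S.e i))))
      = a • (S.sgn i • S.g (S.nabla (S.e i) W) (S.e i))
        + (b * S.ε) • (S.sgn i • (S.η (S.e i) * S.g (S.nabla S.ξ W) (S.e i))) := by
    intro i
    rw [smul_add, smul_comm (S.sgn i) a, smul_comm (S.sgn i) b, smul_comm (S.sgn i) S.ε,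
      mul_smul]
  rw [Finset.sum_congr rfl (fun i _ => hsplit i), Finset.sum_add_distrib,
    ← Finset.smul_sum, ← Finset.smul_sum]
  have hT : (∑ i, S.sgn i • S.g (S.nabla (S.e i) W) (S.e i)) = S.trA W := by
    unfold trA
    exact Finset.sum_congr rfl (fun i _ => by rw [S.g_symm])
  have hC : (∑ i, S.sgn i • (S.η (S.e i) * S.g (S.nabla S.ξ W) (S.e i)))
      = S.ε • S.g (S.nabla S.ξ W) S.ξ := by
    refine S.contract_eta (fun x => S.g (S.nabla S.ξ W) x) (fun x y => S.g_add₂ _ x y)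
      (fun f x => S.g_smul₂ f _ x)
  rw [hT, hC, mul_smul, S.eps_eps, S.g_symm (S.nabla S.ξ W) S.ξ]

/-- SIG of Bhat vanishes -/
lemma SIG_Bhat (W : V) (a b : ℝ)
    (hRic : ∀ X Y : V, S.Ric X Y = a • S.g X Y + b • (S.η X * S.η Y)) :
    S.SIG (S.Bhat W) = 0 := by
  unfold SIG
  have hterm : ∀ i j, (S.sgn i * S.sgn j) •
      (S.Dop (S.Bhat W) (S.e i) (S.e j) (S.e j) (S.e i)
        - S.Dop (S.Bhat W) (S.e j) (S.e i) (S.e j) (S.e i))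
      = S.sgn i • (S.sgn j • S.g (S.R (S.e i) (S.e j) (S.nabla (S.e j) W)) (S.e i))
        - S.sgn i • (S.sgn j • S.g (S.nabla (S.R (S.e i) (S.e j) (S.e j)) W) (S.e i)) := by
    intro i j
    rw [S.P2 W (S.e i) (S.e j) (S.e j) (S.e i), smul_sub, mul_smul, mul_smul, ← smul_sub,
      ← smul_sub]
  rw [Finset.sum_congr rfl (fun i _ => Finset.sum_congr rfl (fun j _ => hterm i j))]
  have hsplit : ∀ i, ∑ j, (S.sgn i • (S.sgn j • S.g (S.R (S.e i) (S.e j) (S.nabla (S.e j) W)) (S.e i))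
      - S.sgn i • (S.sgn j • S.g (S.nabla (S.R (S.e i) (S.e j) (S.e j)) W) (S.e i)))
      = S.sgn i • (∑ j, S.sgn j • S.g (S.R (S.e i) (S.e j) (S.nabla (S.e j) W)) (S.e i))
        - S.sgn i • (∑ j, S.sgn j • S.g (S.nabla (S.R (S.e i) (S.e j) (S.e j)) W) (S.e i)) := by
    intro i
    rw [Finset.sum_sub_distrib, Finset.smul_sum, Finset.smul_sum]
  rw [Finset.sum_congr rfl (fun i _ => hsplit i), Finset.sum_sub_distrib]
  have hK1 : (∑ i, S.sgn i • ∑ j, S.sgn j • S.g (S.R (S.e i) (S.e j) (S.nabla (S.e j) W)) (S.e i))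
      = ∑ j, S.sgn j • S.Ric (S.e j) (S.nabla (S.e j) W) := by
    have h1 : ∀ i, S.sgn i • (∑ j, S.sgn j • S.g (S.R (S.e i) (S.e j) (S.nabla (S.e j) W)) (S.e i))
        = ∑ j, S.sgn j • (S.sgn i • S.g (S.R (S.e i) (S.e j) (S.nabla (S.e j) W)) (S.e i)) := by
      intro i
      rw [Finset.smul_sum]
      exact Finset.sum_congr rfl (fun j _ => smul_comm _ _ _)
    rw [Finset.sum_congr rfl (fun i _ => h1 i), Finset.sum_comm]
    refine Finset.sum_congr rfl (fun j _ => ?_)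
    rw [← Finset.smul_sum]
    rfl
  rw [hK1, S.K1val W a b hRic, S.K2val W a b hRic, sub_self]

end ContactSetup
end Aux7

section Aux8
variable {C : Type} [CommRing C] [Algebra ℝ C]
  {V : Type} [AddCommGroup V] [Module ℝ V] [Module C V] [IsScalarTower ℝ C V]
  {n : ℕ} (S : ContactSetup C V n)
namespace ContactSetup

lemma lieG_nabla (W X Y : V) :
    S.lieG W X Y = S.g (S.nabla X W) Y + S.g X (S.nabla Y W) := by
  unfold lieG
  rw [S.nabla_metric W X Y, S.bracket_eq W X, S.bracket_eq W Y, S.g_sub₁, S.g_sub₂]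
  ring

lemma Dh_eq_B (W : V) (c m : ℝ)
    (hW : ∀ X Y : V, S.hcm c m X Y = S.g (S.nabla X W) Y + S.g X (S.nabla Y W))
    (U Y Z : V) :
    S.Dh c m U Y Z = S.Bhat W U Y Z + S.g Y (S.Bf W U Z) := by
  unfold Dh Bhat Bf
  rw [hW Y Z, hW (S.nabla U Y) Z, hW Y (S.nabla U Z)]
  rw [S.d_add, S.nabla_metric U (S.nabla Y W) Z, S.nabla_metric U Y (S.nabla Z W)]
  rw [S.g_sub₁, S.g_sub₂]
  ring

lemma P1' (W : V) (c m : ℝ)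
    (hW : ∀ X Y : V, S.hcm c m X Y = S.g (S.nabla X W) Y + S.g X (S.nabla Y W))
    (X Y Z : V) :
    S.Bhat W X Y Z + S.Bhat W X Y Z
    = S.Hsf c m X Y Z + S.D1f W X Y Z - S.D1f W X Z Y - S.D1f W Y Z X := by
  have hD : ∀ P Q R' : V, S.D1f W P Q R' = S.Bhat W P Q R' - S.Bhat W Q P R' := by
    intro P Q R'
    unfold D1f Bhat
    rw [← S.B_antisym W P Q, S.g_sub₁]
  unfold Hsf
  rw [S.Dh_eq_B W c m hW X Y Z, S.Dh_eq_B W c m hW Y X Z, S.Dh_eq_B W c m hW Z X Y,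
    hD X Y Z, hD X Z Y, hD Y Z X]
  have hg1 : S.g Y (S.Bf W X Z) = S.Bhat W X Z Y := S.g_symm _ _
  have hg2 : S.g X (S.Bf W Y Z) = S.Bhat W Y Z X := S.g_symm _ _
  have hg3 : S.g X (S.Bf W Z Y) = S.Bhat W Z Y X := S.g_symm _ _
  rw [hg1, hg2, hg3]
  ring

lemma master (W : V) (c m : ℝ)
    (hW : ∀ X Y : V, S.hcm c m X Y = S.g (S.nabla X W) Y + S.g X (S.nabla Y W))
    (U X Y Z : V) :
    S.Dop (S.Bhat W) U X Y Z + S.Dop (S.Bhat W) U X Y Z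
    = S.Dop (S.Hsf c m) U X Y Z + S.Dop (S.D1f W) U X Y Z
      - S.Dop (S.D1f W) U X Z Y - S.Dop (S.D1f W) U Y Z X := by
  have h2 := S.P1' W c m hW (S.nabla U X) Y Z
  have h3 := S.P1' W c m hW X (S.nabla U Y) Z
  have h4 := S.P1' W c m hW X Y (S.nabla U Z)
  have hd := congrArg (S.d U) (S.P1' W c m hW X Y Z)
  rw [S.d_add, S.d_sub, S.d_sub, S.d_add] at hd
  unfold Dop
  linear_combination hd - h2 - h3 - h4

lemma dsum_iter (T : Fin (2*n+1) → Fin (2*n+1) → C) :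
    ∑ i, ∑ j, (S.sgn i * S.sgn j) • T i j = ∑ i, S.sgn i • ∑ j, S.sgn j • T i j := by
  refine Finset.sum_congr rfl (fun i _ => ?_)
  rw [Finset.smul_sum]
  exact Finset.sum_congr rfl (fun j _ => mul_smul _ _ _)

lemma dsum_iter' (T : Fin (2*n+1) → Fin (2*n+1) → C) :
    ∑ i, ∑ j, (S.sgn i * S.sgn j) • T i j = ∑ j, S.sgn j • ∑ i, S.sgn i • T i j := by
  rw [Finset.sum_comm]
  refine Finset.sum_congr rfl (fun j _ => ?_)
  rw [Finset.smul_sum]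
  refine Finset.sum_congr rfl (fun i _ => ?_)
  rw [mul_comm, mul_smul]

lemma SIG_D1val (W : V) (a b : ℝ)
    (hRic : ∀ X Y : V, S.Ric X Y = a • S.g X Y + b • (S.η X * S.η Y)) :
    S.SIG (S.D1f W) = -(a • S.trA W + b • S.g S.ξ (S.nabla S.ξ W)) := by
  rw [S.SIG_eq]
  have h1 : (∑ i, S.sgn i • ∑ j, S.sgn j • S.Dop (S.D1f W) (S.e i) (S.e j) (S.e j) (S.e i)) = 0 :=
    Finset.sum_eq_zero (fun i _ => by rw [S.V1 W (S.e i) (S.e i), smul_zero])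
  have h2 : (∑ j, S.sgn j • ∑ i, S.sgn i • S.Dop (S.D1f W) (S.e j) (S.e i) (S.e j) (S.e i))
      = a • S.trA W + b • S.g S.ξ (S.nabla S.ξ W) := by
    rw [Finset.sum_congr rfl (fun j _ => by rw [S.V2 W (S.e j) (S.e j)])]
    exact S.OG2val W a b hRic
  rw [h1, h2, zero_sub]

lemma Sbval (W : V) (a b : ℝ)
    (hRic : ∀ X Y : V, S.Ric X Y = a • S.g X Y + b • (S.η X * S.η Y)) :
    ∑ i, ∑ j, (S.sgn i * S.sgn j) • S.Dop (S.D1f W) (S.e i) (S.e j) (S.e i) (S.e j)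
    = a • S.trA W + b • S.g S.ξ (S.nabla S.ξ W) := by
  rw [S.dsum_iter]
  rw [Finset.sum_congr rfl (fun i _ => by rw [S.V2 W (S.e i) (S.e i)])]
  exact S.OG2val W a b hRic

lemma Sc1val (W : V) :
    ∑ i, ∑ j, (S.sgn i * S.sgn j) • S.Dop (S.D1f W) (S.e j) (S.e i) (S.e i) (S.e j) = 0 := by
  rw [S.dsum_iter']
  exact Finset.sum_eq_zero (fun j _ => by rw [S.V1 W (S.e j) (S.e j), smul_zero])

lemma Sc2val (W : V) (a b : ℝ)
    (hRic : ∀ X Y : V, S.Ric X Y = a • S.g X Y + b • (S.η X * S.η Y)) :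
    ∑ i, ∑ j, (S.sgn i * S.sgn j) • S.Dop (S.D1f W) (S.e j) (S.e j) (S.e i) (S.e i)
    = -(a • S.trA W + b • S.g S.ξ (S.nabla S.ξ W)) := by
  rw [S.dsum_iter']
  rw [Finset.sum_congr rfl (fun j _ => by rw [S.V3 W (S.e j) (S.e j)])]
  have h : ∀ j : Fin (2*n+1), S.sgn j • -(S.d (S.e j) (S.Ric (S.e j) W)
      - S.Ric (S.nabla (S.e j) (S.e j)) W)
      = -(S.sgn j • (S.d (S.e j) (S.Ric (S.e j) W) - S.Ric (S.nabla (S.e j) (S.e j)) W)) := by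
    intro j; rw [smul_neg]
  rw [Finset.sum_congr rfl (fun j _ => h j), Finset.sum_neg_distrib, S.OG2val W a b hRic]

lemma combine_add (F G : Fin (2*n+1) → Fin (2*n+1) → C) :
    (∑ i, ∑ j, F i j) + (∑ i, ∑ j, G i j) = ∑ i, ∑ j, (F i j + G i j) := by
  rw [← Finset.sum_add_distrib]
  exact Finset.sum_congr rfl (fun i _ => by rw [← Finset.sum_add_distrib])

lemma combine_sub (F G : Fin (2*n+1) → Fin (2*n+1) → C) :
    (∑ i, ∑ j, F i j) - (∑ i, ∑ j, G i j) = ∑ i, ∑ j, (F i j - G i j) := by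
  rw [← Finset.sum_sub_distrib]
  exact Finset.sum_congr rfl (fun i _ => by rw [← Finset.sum_sub_distrib])

/-- the grand identity: `4 G = 0` -/
lemma fourGG (W : V) (a b c m : ℝ)
    (hRic : ∀ X Y : V, S.Ric X Y = a • S.g X Y + b • (S.η X * S.η Y))
    (hW : ∀ X Y : V, S.hcm c m X Y = S.g (S.nabla X W) Y + S.g X (S.nabla Y W)) :
    (a • S.trA W + b • S.g S.ξ (S.nabla S.ξ W))
      + (a • S.trA W + b • S.g S.ξ (S.nabla S.ξ W))
      + (a • S.trA W + b • S.g S.ξ (S.nabla S.ξ W))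
      + (a • S.trA W + b • S.g S.ξ (S.nabla S.ξ W)) = 0 := by
  have key : S.SIG (S.Bhat W) + S.SIG (S.Bhat W)
      = S.SIG (S.Hsf c m) + S.SIG (S.D1f W)
        - (∑ i, ∑ j, (S.sgn i * S.sgn j) • S.Dop (S.D1f W) (S.e i) (S.e j) (S.e i) (S.e j))
        - (∑ i, ∑ j, (S.sgn i * S.sgn j) • S.Dop (S.D1f W) (S.e i) (S.e j) (S.e i) (S.e j))
        + (∑ i, ∑ j, (S.sgn i * S.sgn j) • S.Dop (S.D1f W) (S.e j) (S.e i) (S.e i) (S.e j))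
        + (∑ i, ∑ j, (S.sgn i * S.sgn j) • S.Dop (S.D1f W) (S.e j) (S.e j) (S.e i) (S.e i)) := by
    unfold SIG
    rw [combine_add, combine_add, combine_sub, combine_sub, combine_add, combine_add]
    refine Finset.sum_congr rfl (fun i _ => Finset.sum_congr rfl (fun j _ => ?_))
    have h := S.master W c m hW (S.e i) (S.e j) (S.e j) (S.e i)
    have h' := S.master W c m hW (S.e j) (S.e i) (S.e j) (S.e i)
    have hC : (S.Dop (S.Bhat W) (S.e i) (S.e j) (S.e j) (S.e i)
          - S.Dop (S.Bhat W) (S.e j) (S.e i) (S.e j) (S.e i))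
        + (S.Dop (S.Bhat W) (S.e i) (S.e j) (S.e j) (S.e i)
          - S.Dop (S.Bhat W) (S.e j) (S.e i) (S.e j) (S.e i))
        = ((S.Dop (S.Hsf c m) (S.e i) (S.e j) (S.e j) (S.e i)
            - S.Dop (S.Hsf c m) (S.e j) (S.e i) (S.e j) (S.e i))
          + (S.Dop (S.D1f W) (S.e i) (S.e j) (S.e j) (S.e i)
            - S.Dop (S.D1f W) (S.e j) (S.e i) (S.e j) (S.e i))
          - S.Dop (S.D1f W) (S.e i) (S.e j) (S.e i) (S.e j)
          - S.Dop (S.D1f W) (S.e i) (S.e j) (S.e i) (S.e j))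
          + S.Dop (S.D1f W) (S.e j) (S.e i) (S.e i) (S.e j)
          + S.Dop (S.D1f W) (S.e j) (S.e j) (S.e i) (S.e i) := by
      linear_combination h - h'
    calc (S.sgn i * S.sgn j) • (S.Dop (S.Bhat W) (S.e i) (S.e j) (S.e j) (S.e i)
            - S.Dop (S.Bhat W) (S.e j) (S.e i) (S.e j) (S.e i))
          + (S.sgn i * S.sgn j) • (S.Dop (S.Bhat W) (S.e i) (S.e j) (S.e j) (S.e i)
            - S.Dop (S.Bhat W) (S.e j) (S.e i) (S.e j) (S.e i))
        = (S.sgn i * S.sgn j) • ((S.Dop (S.Bhat W) (S.e i) (S.e j) (S.e j) (S.e i)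
            - S.Dop (S.Bhat W) (S.e j) (S.e i) (S.e j) (S.e i))
          + (S.Dop (S.Bhat W) (S.e i) (S.e j) (S.e j) (S.e i)
            - S.Dop (S.Bhat W) (S.e j) (S.e i) (S.e j) (S.e i))) := by rw [smul_add]
      _ = _ := by
          rw [hC]
          simp only [smul_add, smul_sub]
  rw [S.SIG_Bhat W a b hRic, S.SIG_Hs c m, S.SIG_D1val W a b hRic, S.Sbval W a b hRic,
    S.Sc1val W, S.Sc2val W a b hRic] at key
  linear_combination key

end ContactSetup
end Aux8

end

/-- on a `(2n+1)`-dimensional contact pseudo-metric manifold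
admitting an η-Ricci soliton with `Ric = a g + b η⊗η` (`a, b` constants),
one has `Ricⁱʲ Ricᵢⱼ + λ r + μ(εa + b) = 0`. -/
theorem stmt6
    {C : Type} [CommRing C] [Algebra ℝ C]
    {V : Type} [AddCommGroup V] [Module ℝ V] [Module C V] [IsScalarTower ℝ C V]
    {n : ℕ} (S : ContactSetup C V n)
    (W : V) (lam mu a b : ℝ)
    (hSol : S.IsEtaRicciSoliton W lam mu)
    (hRic : ∀ X Y, S.Ric X Y = a • S.g X Y + b • (S.η X * S.η Y)) :
    (∑ i, ∑ j, (S.sgn i * S.sgn j) • (S.Ric (S.e i) (S.e j) * S.Ric (S.e i) (S.e j)))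
      + lam • S.scal + algebraMap ℝ C (mu * (S.ε * a + b)) = 0 := by
  classical
  -- soliton gives the form of the symmetrized ∇W
  have hW : ∀ X Y : V, S.hcm (-(2*(a+lam))) (-(2*(b+mu))) X Y
      = S.g (S.nabla X W) Y + S.g X (S.nabla Y W) := by
    intro X Y
    have hs := hSol X Y
    rw [S.lieG_nabla W X Y] at hs
    have hr := hRic X Y
    show (-(2*(a+lam))) • S.g X Y + (-(2*(b+mu))) • (S.η X * S.η Y)
        = S.g (S.nabla X W) Y + S.g X (S.nabla Y W)
    simp only [Algebra.smul_def, map_neg, map_mul, map_add, map_ofNat] at hs hr ⊢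
    linear_combination -hs + 2*hr
  have h4 := S.fourGG W a b (-(2*(a+lam))) (-(2*(b+mu))) hRic hW
  -- frame traces
  have hη2 : (∑ i, S.sgn i • (S.η (S.e i) * S.η (S.e i))) = algebraMap ℝ C S.ε := by
    have h : ∑ i, S.sgn i • (S.η (S.e i) * S.η (S.e i)) = S.ε • S.η S.ξ :=
      S.contract_eta (fun x => S.η x) (fun x y => by show S.η (x+y) = _; rw [map_add])
        (fun f x => by show S.η (f • x) = _; rw [map_smul, smul_eq_mul])
    rw [h, S.η_ξ, Algebra.smul_def, mul_one]
  have hone : (∑ _i : Fin (2*n+1), (1:C)) = ((2*n+1 : ℕ) : C) := by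
    rw [Finset.sum_const, Finset.card_univ, Fintype.card_fin, nsmul_eq_mul, mul_one]
  have hgii : (∑ i, S.sgn i • S.g (S.e i) (S.e i)) = ((2*n+1 : ℕ) : C) := by
    have h : ∀ i : Fin (2*n+1), S.sgn i • S.g (S.e i) (S.e i) = 1 := by
      intro i
      rw [S.e_orthonormal, if_pos rfl, Algebra.smul_def, ← map_mul, S.sgn_sq, map_one]
    rw [Finset.sum_congr rfl (fun i _ => h i), hone]
  -- trace of the soliton equation
  have htrA : S.trA W + S.trA W
      = algebraMap ℝ C (-(2*(a+lam))) * ((2*n+1 : ℕ) : C)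
        + algebraMap ℝ C (-(2*(b+mu))) * algebraMap ℝ C S.ε := by
    have h2 : ∑ i, S.sgn i • S.hcm (-(2*(a+lam))) (-(2*(b+mu))) (S.e i) (S.e i)
        = S.trA W + S.trA W := by
      have h1 : ∀ i, S.hcm (-(2*(a+lam))) (-(2*(b+mu))) (S.e i) (S.e i)
          = S.g (S.e i) (S.nabla (S.e i) W) + S.g (S.e i) (S.nabla (S.e i) W) := by
        intro i
        rw [hW, S.g_symm (S.nabla (S.e i) W) (S.e i)]
      rw [Finset.sum_congr rfl (fun i _ => by rw [h1 i, smul_add]), Finset.sum_add_distrib]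
      rfl
    have h3 : ∑ i, S.sgn i • S.hcm (-(2*(a+lam))) (-(2*(b+mu))) (S.e i) (S.e i)
        = (-(2*(a+lam))) • ((2*n+1 : ℕ) : C)
          + (-(2*(b+mu))) • (algebraMap ℝ C S.ε) := by
      have hsplit : ∀ i, S.sgn i • S.hcm (-(2*(a+lam))) (-(2*(b+mu))) (S.e i) (S.e i)
          = (-(2*(a+lam))) • (S.sgn i • S.g (S.e i) (S.e i))
            + (-(2*(b+mu))) • (S.sgn i • (S.η (S.e i) * S.η (S.e i))) := by
        intro i
        show S.sgn i • ((-(2*(a+lam))) • S.g (S.e i) (S.e i)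
            + (-(2*(b+mu))) • (S.η (S.e i) * S.η (S.e i))) = _
        rw [smul_add, smul_comm (S.sgn i) (-(2*(a+lam))),
          smul_comm (S.sgn i) (-(2*(b+mu)))]
      rw [Finset.sum_congr rfl (fun i _ => hsplit i), Finset.sum_add_distrib,
        ← Finset.smul_sum, ← Finset.smul_sum, hgii, hη2]
    rw [← h2, h3, Algebra.smul_def, Algebra.smul_def]
  -- the soliton equation at (ξ,ξ)
  have hξξ : S.g S.ξ (S.nabla S.ξ W) + S.g S.ξ (S.nabla S.ξ W)
      = algebraMap ℝ C (-(2*(a+lam))) * algebraMap ℝ C S.ε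
        + algebraMap ℝ C (-(2*(b+mu))) := by
    have h1 := hW S.ξ S.ξ
    have h2 : S.hcm (-(2*(a+lam))) (-(2*(b+mu))) S.ξ S.ξ
        = algebraMap ℝ C (-(2*(a+lam))) * algebraMap ℝ C S.ε + algebraMap ℝ C (-(2*(b+mu))) := by
      show (-(2*(a+lam))) • S.g S.ξ S.ξ + (-(2*(b+mu))) • (S.η S.ξ * S.η S.ξ) = _
      rw [S.g_xi_xi, S.η_ξ, mul_one, Algebra.smul_def, Algebra.smul_def, mul_one]
    rw [← h2, h1, S.g_symm (S.nabla S.ξ W) S.ξ]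
  -- evaluation of the scalar curvature
  have hscal : S.scal = algebraMap ℝ C a * ((2*n+1 : ℕ) : C)
      + algebraMap ℝ C b * algebraMap ℝ C S.ε := by
    show (∑ i, S.sgn i • S.Ric (S.e i) (S.e i)) = _
    have hsplit : ∀ i, S.sgn i • S.Ric (S.e i) (S.e i)
        = a • (S.sgn i • S.g (S.e i) (S.e i))
          + b • (S.sgn i • (S.η (S.e i) * S.η (S.e i))) := by
      intro i
      rw [hRic, smul_add, smul_comm (S.sgn i) a, smul_comm (S.sgn i) b]
    rw [Finset.sum_congr rfl (fun i _ => hsplit i), Finset.sum_add_distrib,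
      ← Finset.smul_sum, ← Finset.smul_sum, hgii, hη2, Algebra.smul_def, Algebra.smul_def]
  -- evaluation of |Ric|²
  have hSq : (∑ i, ∑ j, (S.sgn i * S.sgn j) • (S.Ric (S.e i) (S.e j) * S.Ric (S.e i) (S.e j)))
      = algebraMap ℝ C (a*a) * ((2*n+1 : ℕ) : C)
        + algebraMap ℝ C (2*(a*b)) * algebraMap ℝ C S.ε
        + algebraMap ℝ C (b*b) * (algebraMap ℝ C S.ε * algebraMap ℝ C S.ε) := by
    have step1 : ∀ i j, (S.sgn i * S.sgn j) • (S.Ric (S.e i) (S.e j) * S.Ric (S.e i) (S.e j))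
        = (a*a) • ((S.sgn i * S.sgn j) • (S.g (S.e i) (S.e j) * S.g (S.e i) (S.e j)))
          + (2*(a*b)) • ((S.sgn i * S.sgn j) •
              (S.g (S.e i) (S.e j) * (S.η (S.e i) * S.η (S.e j))))
          + (b*b) • ((S.sgn i * S.sgn j) •
              ((S.η (S.e i) * S.η (S.e j)) * (S.η (S.e i) * S.η (S.e j)))) := by
      intro i j
      rw [hRic]
      simp only [Algebra.smul_def, map_mul, map_ofNat]
      ring
    rw [Finset.sum_congr rfl (fun i _ => Finset.sum_congr rfl (fun j _ => step1 i j))]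
    have hsplitsum : ∀ i, ∑ j, ((a*a) • ((S.sgn i * S.sgn j) • (S.g (S.e i) (S.e j) * S.g (S.e i) (S.e j)))
        + (2*(a*b)) • ((S.sgn i * S.sgn j) • (S.g (S.e i) (S.e j) * (S.η (S.e i) * S.η (S.e j))))
        + (b*b) • ((S.sgn i * S.sgn j) • ((S.η (S.e i) * S.η (S.e j)) * (S.η (S.e i) * S.η (S.e j)))))
        = (a*a) • (∑ j, (S.sgn i * S.sgn j) • (S.g (S.e i) (S.e j) * S.g (S.e i) (S.e j)))
          + (2*(a*b)) • (∑ j, (S.sgn i * S.sgn j) • (S.g (S.e i) (S.e j) * (S.η (S.e i) * S.η (S.e j))))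
          + (b*b) • (∑ j, (S.sgn i * S.sgn j) • ((S.η (S.e i) * S.η (S.e j)) * (S.η (S.e i) * S.η (S.e j)))) := by
      intro i
      rw [Finset.sum_add_distrib, Finset.sum_add_distrib, ← Finset.smul_sum,
        ← Finset.smul_sum, ← Finset.smul_sum]
    rw [Finset.sum_congr rfl (fun i _ => hsplitsum i)]
    have hq1 : ∀ i, (∑ j, (S.sgn i * S.sgn j) • (S.g (S.e i) (S.e j) * S.g (S.e i) (S.e j))) = 1 := by
      intro i
      rw [Finset.sum_eq_single i]
      · rw [S.e_orthonormal, if_pos rfl, ← map_mul, S.sgn_sq]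
        simp
      · intro j _ hj
        rw [S.e_orthonormal, if_neg (fun hh => hj hh.symm), zero_mul, smul_zero]
      · intro hh; exact absurd (Finset.mem_univ i) hh
    have hq2 : ∀ i, (∑ j, (S.sgn i * S.sgn j) • (S.g (S.e i) (S.e j) * (S.η (S.e i) * S.η (S.e j))))
        = S.sgn i • (S.η (S.e i) * S.η (S.e i)) := by
      intro i
      rw [Finset.sum_eq_single i]
      · rw [S.e_orthonormal, if_pos rfl, S.sgn_sq, one_smul, Algebra.smul_def]

      · intro j _ hj
        rw [S.e_orthonormal, if_neg (fun hh => hj hh.symm), zero_mul, smul_zero]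
      · intro hh; exact absurd (Finset.mem_univ i) hh
    have hq3 : ∀ i, (∑ j, (S.sgn i * S.sgn j) • ((S.η (S.e i) * S.η (S.e j)) * (S.η (S.e i) * S.η (S.e j))))
        = (S.sgn i • (S.η (S.e i) * S.η (S.e i))) * algebraMap ℝ C S.ε := by
      intro i
      rw [← hη2, Finset.mul_sum]
      refine Finset.sum_congr rfl (fun j _ => ?_)
      simp only [Algebra.smul_def, map_mul]
      ring
    have hfinal : ∀ i, (a*a) • (∑ j, (S.sgn i * S.sgn j) • (S.g (S.e i) (S.e j) * S.g (S.e i) (S.e j)))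
          + (2*(a*b)) • (∑ j, (S.sgn i * S.sgn j) • (S.g (S.e i) (S.e j) * (S.η (S.e i) * S.η (S.e j))))
          + (b*b) • (∑ j, (S.sgn i * S.sgn j) • ((S.η (S.e i) * S.η (S.e j)) * (S.η (S.e i) * S.η (S.e j))))
        = (a*a) • (1:C) + (2*(a*b)) • (S.sgn i • (S.η (S.e i) * S.η (S.e i)))
          + (b*b) • ((S.sgn i • (S.η (S.e i) * S.η (S.e i))) * algebraMap ℝ C S.ε) := by
      intro i
      rw [hq1 i, hq2 i, hq3 i]
    rw [Finset.sum_congr rfl (fun i _ => hfinal i), Finset.sum_add_distrib,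
      Finset.sum_add_distrib, ← Finset.smul_sum, ← Finset.smul_sum, ← Finset.smul_sum,
      hone, ← Finset.sum_mul, hη2]
    rw [Algebra.smul_def, Algebra.smul_def, Algebra.smul_def]
  -- final assembly
  have four_eq : ∀ x : C, x + x + x + x = (4:ℝ) • x := by
    intro x
    rw [Algebra.smul_def, map_ofNat]
    ring
  suffices h : (4:ℝ) • ((∑ i, ∑ j, (S.sgn i * S.sgn j) • (S.Ric (S.e i) (S.e j) * S.Ric (S.e i) (S.e j)))
      + lam • S.scal + algebraMap ℝ C (mu * (S.ε * a + b))) = 0 by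
    have h2 := congrArg (fun y => (1/4 : ℝ) • y) h
    simpa [smul_smul] using h2
  rw [← four_eq]
  rw [hSq, hscal]
  have heps : algebraMap ℝ C S.ε * algebraMap ℝ C S.ε = 1 := by
    rw [← map_mul, S.eps_sq, map_one]
  simp only [Algebra.smul_def, map_mul, map_add, map_neg, map_ofNat] at h4 htrA hξξ ⊢
  linear_combination (2*(algebraMap ℝ C a))*htrA + (2*(algebraMap ℝ C b))*hξξ - h4
    + (4*(algebraMap ℝ C b)*(algebraMap ℝ C b))*heps
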